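/- arXiv:1601.03012 — 5 statements merged into one kernel-verified Lean document; each statement's English description precedes it below -/
import Mathlib

section
/- For any constant 0 < c < 1, the series ∑_q q · c^{π(q)}, where q ranges over all primes and π(q) denotes the number of primes ≤ q, converges. -/
open Nat Finset

/-- Chebyshev-type step: the central binomial coefficient is at most `(2n)^{π'(2n+1)}`. -/
lemma centralBinom_le_pow (n : ℕ) (hn : 1 ≤ n) :
    Nat.centralBinom n ≤ (2 * n) ^ (Nat.primeCounting' (2 * n + 1)) := by
  have h2n : 0 < 2 * n := by omega
  have hprod := Nat.prod_pow_factorization_choose (2 * n) n (by omega)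
  rw [← Nat.primesBelow_card_eq_primeCounting']
  have hsub : (∏ p ∈ Finset.range (2 * n + 1), p ^ (Nat.choose (2 * n) n).factorization p)
      = ∏ p ∈ Nat.primesBelow (2 * n + 1), p ^ (Nat.choose (2 * n) n).factorization p := by
    refine (Finset.prod_subset (Finset.filter_subset _ _) ?_).symm
    intro p hp hnp
    have : ¬ p.Prime := by
      simp only [Nat.primesBelow, Finset.mem_filter] at hnp
      tauto
    rw [Nat.factorization_eq_zero_of_not_prime _ this, pow_zero]
  have hle : ∀ p ∈ Nat.primesBelow (2 * n + 1),
      p ^ (Nat.choose (2 * n) n).factorization p ≤ 2 * n := fun p _ =>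
    Nat.pow_factorization_choose_le h2n
  calc Nat.centralBinom n
      = ∏ p ∈ Nat.primesBelow (2 * n + 1), p ^ (Nat.choose (2 * n) n).factorization p := by
        rw [Nat.centralBinom, ← hsub, hprod]
    _ ≤ (2 * n) ^ (Nat.primesBelow (2 * n + 1)).card :=
        Finset.prod_le_pow_card _ _ _ hle

/-- Chebyshev lower bound form: `2^(2n) ≤ (2n)^(π(2n)+1)` for `n ≥ 4`. -/
lemma two_pow_le (n : ℕ) (hn : 4 ≤ n) :
    2 ^ (2 * n) ≤ (2 * n) ^ (Nat.primeCounting (2 * n) + 1) := by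
  have h1 : 4 ^ n < n * Nat.centralBinom n := Nat.four_pow_lt_mul_centralBinom n hn
  have h2 : Nat.centralBinom n ≤ (2 * n) ^ (Nat.primeCounting' (2 * n + 1)) :=
    centralBinom_le_pow n (by omega)
  have hpc : Nat.primeCounting' (2 * n + 1) = Nat.primeCounting (2 * n) := rfl
  calc 2 ^ (2 * n) = 4 ^ n := by rw [pow_mul]; norm_num
    _ ≤ n * Nat.centralBinom n := h1.le
    _ ≤ (2 * n) * ((2 * n) ^ (Nat.primeCounting (2 * n))) := by
        rw [← hpc]
        exact Nat.mul_le_mul (by omega) h2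
    _ = (2 * n) ^ (Nat.primeCounting (2 * n) + 1) := by ring

/-- Every prime `q` satisfies `q ≤ (4 π(q) + 7)^2`. -/
lemma prime_le_sq (q : ℕ) (hq : q.Prime) : q ≤ (4 * Nat.primeCounting q + 7) ^ 2 := by
  rcases lt_or_ge q 49 with h | h
  · have : (7:ℕ)^2 ≤ (4 * Nat.primeCounting q + 7) ^ 2 :=
      Nat.pow_le_pow_left (by omega) 2
    omega
  · -- q is an odd prime ≥ 49
    have hodd : q % 2 = 1 := Nat.odd_iff.mp (hq.odd_of_ne_two (by omega))
    set n := q / 2 with hn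
    have h2n : 2 * n = q - 1 := by omega
    have hn4 : 4 ≤ n := by omega
    set k := Nat.primeCounting q with hk
    have hcheb : 2 ^ (q - 1) ≤ (q - 1) ^ (Nat.primeCounting (q - 1) + 1) := by
      have := two_pow_le n hn4
      rwa [h2n] at this
    have hmono : Nat.primeCounting (q - 1) ≤ k :=
      Nat.monotone_primeCounting (by omega)
    have hq1 : 2 ^ (q - 1) ≤ q ^ (k + 1) := by
      calc 2 ^ (q - 1) ≤ (q - 1) ^ (Nat.primeCounting (q - 1) + 1) := hcheb
        _ ≤ q ^ (Nat.primeCounting (q - 1) + 1) := Nat.pow_le_pow_left (by omega) _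
        _ ≤ q ^ (k + 1) := Nat.pow_le_pow_right (by omega) (by omega)
    set L := Nat.log 2 q with hL
    have hqL : q < 2 ^ (L + 1) := Nat.lt_pow_succ_log_self (by norm_num) q
    have hq2 : q ^ (k + 1) ≤ 2 ^ ((L + 1) * (k + 1)) := by
      rw [pow_mul]
      exact Nat.pow_le_pow_left hqL.le _
    have hexp : q - 1 ≤ (L + 1) * (k + 1) := by
      have : (2:ℕ) ^ (q - 1) ≤ 2 ^ ((L + 1) * (k + 1)) := hq1.trans hq2
      exact (Nat.pow_le_pow_iff_right (by norm_num)).mp this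
    set s := Nat.sqrt q with hs
    have hs2 : s * s ≤ q := by have := Nat.sqrt_le' q; nlinarith
    have hqs : q < (s + 1) * (s + 1) := Nat.lt_succ_sqrt q
    have hLs : L ≤ 2 * s + 1 := by
      have h1 : 2 ^ L ≤ q := Nat.pow_log_le_self 2 (by omega)
      have h2 : s + 1 < 2 ^ (s + 1) := Nat.lt_two_pow_self (n := s + 1)
      have h3 : (s + 1) * (s + 1) < 2 ^ (s + 1) * 2 ^ (s + 1) :=
        Nat.mul_lt_mul_of_lt_of_lt h2 h2
      have h4 : 2 ^ L < 2 ^ ((s + 1) + (s + 1)) := by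
        rw [pow_add]; omega
      have := (Nat.pow_lt_pow_iff_right (a := 2) (by norm_num)).mp h4
      omega
    have hs7 : 7 ≤ s := by
      have h49 : 7 * 7 ≤ q := by omega
      exact Nat.le_sqrt'.mpr h49
    -- q ≤ (2s+2)(k+1) + 1, s*s ≤ q, so s ≤ 4k+5, q < (s+1)^2 ≤ (4k+6)^2
    have hkey : q ≤ (2 * s + 2) * (k + 1) + 1 := by
      have : (L + 1) * (k + 1) ≤ (2 * s + 2) * (k + 1) :=
        Nat.mul_le_mul_right _ (by omega)
      omega
    have hsk : s ≤ 4 * k + 5 := by nlinarith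
    have : q < (4 * k + 6) * (4 * k + 6) := by nlinarith
    nlinarith

/-- The prime counting function is injective on primes. -/
lemma primeCounting_strictMonoOn {p q : ℕ} (_hp : p.Prime) (hq : q.Prime) (hpq : p < q) :
    Nat.primeCounting p < Nat.primeCounting q := by
  have h1 : Nat.primeCounting p = Nat.count Nat.Prime (p + 1) := rfl
  have h2 : Nat.primeCounting q = Nat.count Nat.Prime (q + 1) := rfl
  have h3 : Nat.count Nat.Prime q < Nat.count Nat.Prime (q + 1) :=
    Nat.count_lt_count_succ_iff.mpr hq
  have h4 : Nat.count Nat.Prime (p + 1) ≤ Nat.count Nat.Prime q :=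
    Nat.count_monotone _ (by omega)
  omega

/-- For `0 < c < 1`, `∑_q q · c^{π(q)}` over primes `q` converges. -/
theorem stmt_1 (c : ℝ) (hc0 : 0 < c) (hc1 : c < 1) :
    Summable (fun q : Nat.Primes => (q : ℝ) * c ^ (Nat.primeCounting q)) := by
  have hcn : ‖c‖ < 1 := by rw [Real.norm_eq_abs, abs_of_pos hc0]; exact hc1
  -- the majorant series over ℕ
  have hg : Summable (fun k : ℕ => ((4 * k + 7 : ℕ) : ℝ) ^ 2 * c ^ k) := by
    have h2 : Summable (fun k : ℕ => (k : ℝ) ^ 2 * c ^ k) :=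
      summable_pow_mul_geometric_of_norm_lt_one 2 hcn
    have h1 : Summable (fun k : ℕ => (k : ℝ) ^ 1 * c ^ k) :=
      summable_pow_mul_geometric_of_norm_lt_one 1 hcn
    have h0 : Summable (fun k : ℕ => c ^ k) := summable_geometric_of_lt_one hc0.le hc1
    have := ((h2.mul_left 16).add ((h1.mul_left 56).add (h0.mul_left 49)))
    refine this.congr fun k => ?_
    push_cast
    ring
  -- compose with the injective map q ↦ π(q)
  have hinj : Function.Injective (fun q : Nat.Primes => Nat.primeCounting (q : ℕ)) := by
    intro a b hab
    by_contra hne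
    have hne' : (a : ℕ) ≠ (b : ℕ) := fun h => hne (Nat.Primes.coe_nat_injective h)
    rcases lt_or_gt_of_ne hne' with h | h
    · exact absurd hab (_root_.ne_of_lt (primeCounting_strictMonoOn a.2 b.2 h))
    · exact absurd hab.symm (_root_.ne_of_lt (primeCounting_strictMonoOn b.2 a.2 h))
  have hmaj : Summable (fun q : Nat.Primes =>
      ((4 * Nat.primeCounting (q : ℕ) + 7 : ℕ) : ℝ) ^ 2 * c ^ (Nat.primeCounting (q : ℕ))) :=
    hg.comp_injective hinj
  refine Summable.of_nonneg_of_le (fun q => ?_) (fun q => ?_) hmaj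
  · positivity
  · have hle : ((q : ℕ) : ℝ) ≤ ((4 * Nat.primeCounting (q : ℕ) + 7 : ℕ) : ℝ) ^ 2 := by
      have := prime_le_sq (q : ℕ) q.2
      exact_mod_cast this
    exact mul_le_mul_of_nonneg_right hle (by positivity)
end

section
/- The sum ∑_q q²/(2(q+1)) · ∏_{p<q} (p+2)/(2(p+1)), where q ranges over primes and p over primes less than q, converges. -/
open Finset

private lemma pow_log_bound : ∀ L : ℕ, 9 ≤ L → 5 * (L + 1) ^ 2 < 2 ^ L := by
  intro L hL
  induction L, hL using Nat.le_induction with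
  | base => norm_num
  | succ n hn ih =>
    have h2 : (2:ℕ) ^ (n + 1) = 2 * 2 ^ n := by ring
    rw [h2]
    nlinarith [ih]

private lemma cb_le (n : ℕ) (hn : 0 < n) :
    Nat.centralBinom n ≤ (2 * n) ^ ((Finset.range (2 * n + 1)).filter Nat.Prime).card := by
  have hcb : Nat.centralBinom n ≠ 0 := (Nat.centralBinom_pos n).ne'
  conv_lhs => rw [← Nat.factorization_prod_pow_eq_self hcb]
  rw [Nat.prod_factorization_eq_prod_primeFactors]
  have hsub : (Nat.centralBinom n).primeFactors ⊆ (Finset.range (2 * n + 1)).filter Nat.Prime := by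
    intro p hp
    rw [Nat.mem_primeFactors] at hp
    obtain ⟨hp1, hp2, _⟩ := hp
    have hν : 1 ≤ (Nat.centralBinom n).factorization p :=
      hp1.factorization_pos_of_dvd hcb hp2
    have hple : p ≤ 2 * n := by
      calc p = p ^ 1 := (pow_one p).symm
        _ ≤ p ^ ((Nat.centralBinom n).factorization p) := Nat.pow_le_pow_right hp1.pos hν
        _ ≤ 2 * n := Nat.pow_factorization_choose_le (by omega)
    simp only [Finset.mem_filter, Finset.mem_range]
    exact ⟨by omega, hp1⟩
  calc (∏ p ∈ (Nat.centralBinom n).primeFactors,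
        p ^ (Nat.centralBinom n).factorization p)
      ≤ ∏ p ∈ (Nat.centralBinom n).primeFactors, 2 * n := by
        refine Finset.prod_le_prod (fun i _ => Nat.zero_le _) (fun p hp => ?_)
        exact Nat.pow_factorization_choose_le (by omega)
      _ = (2 * n) ^ (Nat.centralBinom n).primeFactors.card := Finset.prod_const _
      _ ≤ (2 * n) ^ ((Finset.range (2 * n + 1)).filter Nat.Prime).card :=
        Nat.pow_le_pow_right (by omega) (Finset.card_le_card hsub)

/-- Chebyshev-type bound: for `n ≥ 256`, `(2n)^5 < 2^(#primes ≤ 2n)`. -/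
private lemma prime_count_lb (n : ℕ) (hn : 256 ≤ n) :
    (2 * n) ^ 5 < 2 ^ ((Finset.range (2 * n + 1)).filter Nat.Prime).card := by
  set m := 2 * n with hm
  set K := ((Finset.range (2 * n + 1)).filter Nat.Prime).card with hK
  set L := Nat.log 2 m with hL
  have hm512 : 512 ≤ m := by omega
  have hmne : m ≠ 0 := by omega
  have h2L : 2 ^ L ≤ m := Nat.pow_log_le_self 2 hmne
  have hL2 : m < 2 ^ (L + 1) := Nat.lt_pow_succ_log_self one_lt_two m
  have hL9 : 9 ≤ L := (Nat.le_log_iff_pow_le one_lt_two hmne).mpr (by omega)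
  have hclaim : 5 * (L + 1) ≤ K := by
    by_contra hcon
    push_neg at hcon
    have hchain : 2 ^ m ≤ 2 ^ (5 * (L + 1) ^ 2) := by
      calc (2:ℕ) ^ m = 4 ^ n := by rw [hm]; rw [pow_mul]; norm_num
        _ ≤ 2 * n * Nat.centralBinom n :=
            Nat.four_pow_le_two_mul_self_mul_centralBinom n (by omega)
        _ ≤ m * m ^ K := Nat.mul_le_mul_left m (cb_le n (by omega))
        _ = m ^ (K + 1) := by ring
        _ ≤ (2 ^ (L + 1)) ^ (K + 1) := Nat.pow_le_pow_left (le_of_lt hL2) _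
        _ = 2 ^ ((L + 1) * (K + 1)) := by rw [← pow_mul]
        _ ≤ 2 ^ (5 * (L + 1) ^ 2) := by
            apply Nat.pow_le_pow_right (by norm_num)
            nlinarith [hcon]
    have hmle : m ≤ 5 * (L + 1) ^ 2 := by
      exact (Nat.pow_le_pow_iff_right (by norm_num)).mp hchain
    have := pow_log_bound L hL9
    omega
  calc m ^ 5 < (2 ^ (L + 1)) ^ 5 := Nat.pow_lt_pow_left hL2 (by norm_num)
    _ = 2 ^ (5 * (L + 1)) := by rw [← pow_mul]; ring_nf
    _ ≤ 2 ^ K := Nat.pow_le_pow_right (by norm_num) hclaim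

/-- For `q ≥ 2000`, `q^4 ≤ 2^(#primes < q)`. -/
private lemma key (q : ℕ) (hq : 2000 ≤ q) :
    q ^ 4 ≤ 2 ^ ((Finset.range q).filter Nat.Prime).card := by
  set n := (q - 1) / 2 with hn
  have hn256 : 256 ≤ n := by omega
  have hm : 2 * n + 1 ≤ q := by omega
  have hq2m : q ≤ 2 * (2 * n) := by omega
  have hsub : (Finset.range (2 * n + 1)).filter Nat.Prime ⊆ (Finset.range q).filter Nat.Prime :=
    Finset.filter_subset_filter _ (Finset.range_subset_range.mpr hm)
  have h1 : (2 * n) ^ 5 < 2 ^ ((Finset.range (2 * n + 1)).filter Nat.Prime).card :=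
    prime_count_lb n hn256
  have h2 : q ^ 4 ≤ (2 * n) ^ 5 := by
    calc q ^ 4 ≤ (2 * (2 * n)) ^ 4 := Nat.pow_le_pow_left hq2m 4
      _ = 16 * (2 * n) ^ 4 := by ring
      _ ≤ (2 * n) * (2 * n) ^ 4 := Nat.mul_le_mul_right _ (by omega)
      _ = (2 * n) ^ 5 := by ring
  calc q ^ 4 ≤ (2 * n) ^ 5 := h2
    _ ≤ 2 ^ ((Finset.range (2 * n + 1)).filter Nat.Prime).card := le_of_lt h1
    _ ≤ 2 ^ ((Finset.range q).filter Nat.Prime).card :=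
        Nat.pow_le_pow_right (by norm_num) (Finset.card_le_card hsub)

private lemma telescope : ∀ q : ℕ, 2 ≤ q →
    ∏ j ∈ Finset.Ico 2 q, (((j:ℝ) + 2) / ((j:ℝ) + 1)) = ((q:ℝ) + 1) / 3 := by
  intro q hq
  induction q, hq using Nat.le_induction with
  | base => simp; norm_num
  | succ n hn ih =>
    rw [Finset.prod_Ico_succ_top hn, ih]
    have h1 : ((n:ℝ) + 1) ≠ 0 := by positivity
    push_cast
    field_simp
    ring

private lemma prod_le (q : ℕ) (hq : 2 ≤ q) :
    ∏ p ∈ (Finset.range q).filter Nat.Prime, (((p:ℝ) + 2) / ((p:ℝ) + 1)) ≤ ((q:ℝ) + 1) / 3 := by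
  have hsub : (Finset.range q).filter Nat.Prime ⊆ Finset.Ico 2 q := by
    intro p hp
    simp only [Finset.mem_filter, Finset.mem_range] at hp
    exact Finset.mem_Ico.mpr ⟨hp.2.two_le, hp.1⟩
  rw [← telescope q hq, ← Finset.prod_sdiff hsub]
  have h1 : (1:ℝ) ≤ ∏ j ∈ Finset.Ico 2 q \ (Finset.range q).filter Nat.Prime,
      (((j:ℝ) + 2) / ((j:ℝ) + 1)) := by
    have := Finset.prod_le_prod (s := Finset.Ico 2 q \ (Finset.range q).filter Nat.Prime)
      (f := fun _ : ℕ => (1:ℝ)) (g := fun j : ℕ => ((j:ℝ) + 2) / ((j:ℝ) + 1))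
      (fun i _ => zero_le_one)
      (fun j _ => by show (1:ℝ) ≤ ((j:ℝ) + 2) / ((j:ℝ) + 1)
                     rw [le_div_iff₀ (by positivity)]; linarith)
    simpa using this
  have h2 : (0:ℝ) ≤ ∏ p ∈ (Finset.range q).filter Nat.Prime, (((p:ℝ) + 2) / ((p:ℝ) + 1)) :=
    Finset.prod_nonneg (fun i _ => by positivity)
  nlinarith [h1, h2]

private lemma main_bound (q : ℕ) (hq : 2000 ≤ q) :
    ((q : ℝ) ^ 2 / (2 * ((q : ℝ) + 1))) *
      ∏ p ∈ Finset.filter Nat.Prime (Finset.range q), ((p : ℝ) + 2) / (2 * ((p : ℝ) + 1))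
      ≤ 1 / (q : ℝ) ^ 2 := by
  set k := ((Finset.range q).filter Nat.Prime).card with hk
  have hqpos : (0:ℝ) < q := by positivity
  have hsplit : ∏ p ∈ Finset.filter Nat.Prime (Finset.range q), ((p : ℝ) + 2) / (2 * ((p : ℝ) + 1))
      = (1 / 2) ^ k * ∏ p ∈ (Finset.range q).filter Nat.Prime, (((p:ℝ) + 2) / ((p:ℝ) + 1)) := by
    rw [← Finset.prod_const, ← Finset.prod_mul_distrib]
    apply Finset.prod_congr rfl
    intro p _
    have : ((p:ℝ) + 1) ≠ 0 := by positivity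
    field_simp <;> ring
  rw [hsplit]
  have hkey : (q:ℝ) ^ 4 ≤ 2 ^ k := by
    have := key q hq
    calc ((q:ℝ)) ^ 4 = ((q ^ 4 : ℕ) : ℝ) := by push_cast; ring
      _ ≤ ((2 ^ k : ℕ) : ℝ) := Nat.cast_le.mpr this
      _ = 2 ^ k := by push_cast; ring
  have hprod := prod_le q (by omega)
  have hprodnn : (0:ℝ) ≤ ∏ p ∈ (Finset.range q).filter Nat.Prime, (((p:ℝ) + 2) / ((p:ℝ) + 1)) :=
    Finset.prod_nonneg (fun i _ => by positivity)
  have h2k : (0:ℝ) < 2 ^ k := by positivity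
  have step1 : ((q : ℝ) ^ 2 / (2 * ((q : ℝ) + 1))) *
      ((1 / 2) ^ k * ∏ p ∈ (Finset.range q).filter Nat.Prime, (((p:ℝ) + 2) / ((p:ℝ) + 1)))
      ≤ ((q : ℝ) ^ 2 / (2 * ((q : ℝ) + 1))) * ((1 / 2) ^ k * (((q:ℝ) + 1) / 3)) := by
    apply mul_le_mul_of_nonneg_left _ (by positivity)
    exact mul_le_mul_of_nonneg_left hprod (by positivity)
  refine le_trans step1 ?_
  have heq : ((q : ℝ) ^ 2 / (2 * ((q : ℝ) + 1))) * ((1 / 2) ^ k * (((q:ℝ) + 1) / 3))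
      = (q:ℝ) ^ 2 / (6 * 2 ^ k) := by
    have : ((q:ℝ) + 1) ≠ 0 := by positivity
    field_simp
    ring_nf
    rw [← mul_pow]
    norm_num
  rw [heq]
  rw [div_le_div_iff₀ (by positivity) (by positivity)]
  nlinarith [hkey, sq_nonneg ((q:ℝ))]

/-- `∑_q q²/(2(q+1)) · ∏_{p<q} (p+2)/(2(p+1))` over primes converges. -/
theorem stmt_8 :
    Summable (fun q : Nat.Primes =>
      ((q : ℝ) ^ 2 / (2 * ((q : ℝ) + 1))) *
        ∏ p ∈ Finset.filter Nat.Prime (Finset.range q), ((p : ℝ) + 2) / (2 * ((p : ℝ) + 1))) := by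
  have hg : Summable (fun q : Nat.Primes => 1 / ((q : ℕ) : ℝ) ^ 2) := by
    have h := Real.summable_one_div_nat_pow.mpr (by norm_num : 1 < 2)
    exact h.comp_injective Nat.Primes.coe_nat_injective
  apply Summable.of_norm_bounded_eventually hg
  rw [Filter.eventually_cofinite]
  have hfin : ((fun q : Nat.Primes => (q : ℕ)) ⁻¹' (Set.Iio 2000)).Finite :=
    Set.Finite.preimage (Nat.Primes.coe_nat_injective.injOn)
      (Set.finite_Iio 2000)
  refine hfin.subset ?_
  intro q hq
  simp only [Set.mem_setOf_eq] at hq ⊢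
  by_contra hlt
  simp only [Set.mem_preimage, Set.mem_Iio, not_lt] at hlt
  apply hq
  have hnn : (0:ℝ) ≤ ((q : ℝ) ^ 2 / (2 * ((q : ℝ) + 1))) *
      ∏ p ∈ Finset.filter Nat.Prime (Finset.range (q:ℕ)), ((p : ℝ) + 2) / (2 * ((p : ℝ) + 1)) := by
    apply mul_nonneg (by positivity)
    exact Finset.prod_nonneg (fun i _ => by positivity)
  rw [Real.norm_eq_abs, abs_of_nonneg hnn]
  exact main_bound q hlt
end

section
/- Let c, f : Primes → ℝ with 0 < c < 1 constant value c(p) = c for all p and f(p) ≥ 0, f(p) ≤ 1/p for all primes p. Then ∑_q over primes of [q(1 − c + f(q))/(1 + f(q))]·∏_{p<q} [c/(1 + f(p))] converges, and moreover the total 'probability' ∑_q [(1 − c + f(q))/(1 + f(q))]·∏_{p<q} [c/(1 + f(p))] equals 1. -/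
open Finset Filter

private lemma sq_succ_le_two_pow : ∀ s : ℕ, 6 ≤ s → (s + 1) ^ 2 ≤ 2 ^ s := by
  intro s hs
  induction s with
  | zero => omega
  | succ n ih =>
    rcases Nat.lt_or_ge n 6 with h | h
    · have hn : n = 5 := by omega
      subst hn; norm_num
    · have h1 := ih h
      have h2 : (n + 2) ^ 2 ≤ 2 * (n + 1) ^ 2 := by nlinarith
      calc (n + 1 + 1) ^ 2 ≤ 2 * (n + 1) ^ 2 := h2
        _ ≤ 2 * 2 ^ n := by omega
        _ = 2 ^ (n + 1) := by ring

private lemma nth_prime_le (n : ℕ) : Nat.nth Nat.Prime n ≤ (n + 2) ^ 2 + 64 := by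
  set N := Nat.nth Nat.Prime n with hN
  by_cases h64 : N ≤ 64
  · nlinarith
  push_neg at h64
  have hNp : N.Prime := Nat.nth_mem_of_infinite Nat.infinite_setOf_prime n
  have hodd : N % 2 = 1 := by
    rcases hNp.eq_two_or_odd with h | h
    · omega
    · exact h
  set m := (N + 1) / 2 with hm
  have h2m : 2 * m = N + 1 := by omega
  have hm4 : 4 ≤ m := by omega
  have hcN : Nat.count Nat.Prime N = n := Nat.count_nth_of_infinite Nat.infinite_setOf_prime n
  have hc1 : Nat.count Nat.Prime (N + 1) = n + 1 := by
    rw [Nat.count_succ, hcN, if_pos hNp]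
  have hnot : ¬ (N + 1).Prime := by
    intro h
    rcases h.eq_two_or_odd with h' | h' <;> omega
  have hc2 : Nat.count Nat.Prime (N + 2) = n + 1 := by
    rw [show N + 2 = (N + 1) + 1 from rfl, Nat.count_succ, hc1, if_neg hnot]
  have hsub : (Nat.centralBinom m).primeFactors ⊆ Finset.filter Nat.Prime (Finset.range (N + 2)) := by
    intro p hp
    have hpp : p.Prime := Nat.prime_of_mem_primeFactors hp
    have hdvd : p ∣ Nat.centralBinom m := Nat.dvd_of_mem_primeFactors hp
    have hν : 0 < (Nat.centralBinom m).factorization p :=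
      Nat.Prime.factorization_pos_of_dvd hpp (Nat.centralBinom_ne_zero m) hdvd
    have hple : p ≤ 2 * m := by
      calc p ≤ p ^ (Nat.centralBinom m).factorization p := Nat.le_self_pow (by omega) p
        _ ≤ 2 * m := by
          have := Nat.pow_factorization_choose_le (p := p) (n := 2 * m) (k := m) (by omega)
          simpa [Nat.centralBinom] using this
    simp only [Finset.mem_filter, Finset.mem_range]
    exact ⟨by omega, hpp⟩
  have hcard : (Nat.centralBinom m).primeFactors.card ≤ n + 1 := by
    have := Finset.card_le_card hsub
    rwa [← Nat.count_eq_card_filter_range, hc2] at this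
  have hcb : Nat.centralBinom m ≤ (2 * m) ^ (n + 1) := by
    conv_lhs => rw [← Nat.factorization_prod_pow_eq_self (Nat.centralBinom_ne_zero m)]
    rw [Finsupp.prod]
    calc ∏ p ∈ (Nat.centralBinom m).factorization.support,
          p ^ (Nat.centralBinom m).factorization p
        ≤ ∏ _p ∈ (Nat.centralBinom m).factorization.support, (2 * m) := by
          apply Finset.prod_le_prod'
          intro p hp
          have := Nat.pow_factorization_choose_le (p := p) (n := 2 * m) (k := m)
            (by omega : 0 < 2 * m)
          simpa [Nat.centralBinom] using this
      _ = (2 * m) ^ (Nat.centralBinom m).factorization.support.card := by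
          rw [Finset.prod_const]
      _ ≤ (2 * m) ^ (n + 1) := by
          apply Nat.pow_le_pow_right (by omega)
          simpa [Nat.support_factorization] using hcard
  have h4 : 2 ^ (2 * m) < (2 * m) ^ (n + 2) := by
    calc 2 ^ (2 * m) = 4 ^ m := by rw [show (4:ℕ) = 2^2 from rfl, ← pow_mul]
      _ < m * Nat.centralBinom m := Nat.four_pow_lt_mul_centralBinom m hm4
      _ ≤ (2 * m) * (2 * m) ^ (n + 1) := Nat.mul_le_mul (by omega) hcb
      _ = (2 * m) ^ (n + 2) := by ring
  set s := Nat.sqrt (2 * m) with hs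
  have hs6 : 6 ≤ s := Nat.le_sqrt.mpr (by omega)
  have h2ms : 2 * m ≤ 2 ^ s := by
    calc 2 * m ≤ (s + 1) ^ 2 := le_of_lt (Nat.lt_succ_sqrt' (2 * m))
      _ ≤ 2 ^ s := sq_succ_le_two_pow s hs6
  have hlt : 2 * m < s * (n + 2) := by
    have : 2 ^ (2 * m) < 2 ^ (s * (n + 2)) := by
      calc 2 ^ (2 * m) < (2 * m) ^ (n + 2) := h4
        _ ≤ (2 ^ s) ^ (n + 2) := Nat.pow_le_pow_left h2ms _
        _ = 2 ^ (s * (n + 2)) := by rw [← pow_mul]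
    exact (Nat.pow_lt_pow_iff_right (by omega)).mp this
  have hss : s * s ≤ 2 * m := Nat.sqrt_le (2 * m)
  have hsn : s < n + 2 := by
    by_contra hcon
    push_neg at hcon
    have : s * (n + 2) ≤ s * s := Nat.mul_le_mul_left s hcon
    omega
  have : 2 * m ≤ (n + 1) * (n + 2) := by
    have : s * (n + 2) ≤ (n + 1) * (n + 2) := Nat.mul_le_mul_right _ (by omega)
    omega
  nlinarith

/-- Let `0 < c < 1` and `f` a function on primes with `0 ≤ f(p) ≤ 1/p`. Then
`∑_q q(1-c+f(q))/(1+f(q)) ∏_{p<q} c/(1+f(p))` converges, and the total probability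
`∑_q (1-c+f(q))/(1+f(q)) ∏_{p<q} c/(1+f(p))` equals `1`. -/

theorem stmt_15 (c : ℝ) (hc0 : 0 < c) (hc1 : c < 1) (f : ℕ → ℝ)
    (hf0 : ∀ p : ℕ, p.Prime → 0 ≤ f p) (hf1 : ∀ p : ℕ, p.Prime → f p ≤ 1 / p) :
    Summable (fun q : Nat.Primes =>
      (q : ℝ) * (1 - c + f q) / (1 + f q) *
        ∏ p ∈ Finset.filter Nat.Prime (Finset.range q), c / (1 + f p)) ∧
    (∑' q : Nat.Primes,
      (1 - c + f q) / (1 + f q) *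
        ∏ p ∈ Finset.filter Nat.Prime (Finset.range q), c / (1 + f p)) = 1 := by
  have inf := Nat.infinite_setOf_prime
  have hπp : ∀ n, (Nat.nth Nat.Prime n).Prime := fun n => Nat.nth_mem_of_infinite inf n
  let e : ℕ ≃ Nat.Primes :=
    { toFun := fun n => ⟨Nat.nth Nat.Prime n, hπp n⟩
      invFun := fun q => Nat.count Nat.Prime q
      left_inv := fun n => by simp [Nat.count_nth_of_infinite inf]
      right_inv := fun q => Subtype.ext (Nat.nth_count q.2) }
  have hden : ∀ p : ℕ, p.Prime → 0 < 1 + f p := fun p hp => by linarith [hf0 p hp]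
  set Q : ℕ → ℝ :=
    fun n => ∏ p ∈ Finset.filter Nat.Prime (Finset.range (Nat.nth Nat.Prime n)), c / (1 + f p)
    with hQdef
  have hQ0 : Q 0 = 1 := by
    have h2 : Nat.nth Nat.Prime 0 = 2 := Nat.nth_prime_zero_eq_two
    have hemp : Finset.filter Nat.Prime (Finset.range 2) = ∅ := by decide
    simp [hQdef, h2, hemp]
  have hQsucc : ∀ n, Q (n + 1) = Q n * (c / (1 + f (Nat.nth Nat.Prime n))) := by
    intro n
    rw [hQdef]
    simp only
    rw [Nat.filter_range_nth_eq_insert_of_infinite inf n,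
      Finset.prod_insert (by simp)]
    ring
  have hQnonneg : ∀ n, 0 ≤ Q n := by
    intro n
    apply Finset.prod_nonneg
    intro p hp
    have hp' : p.Prime := (Finset.mem_filter.mp hp).2
    exact le_of_lt (div_pos hc0 (hden p hp'))
  have hrle : ∀ n, c / (1 + f (Nat.nth Nat.Prime n)) ≤ c := fun n =>
    div_le_self hc0.le (by linarith [hf0 _ (hπp n)])
  have hrnonneg : ∀ n, 0 ≤ c / (1 + f (Nat.nth Nat.Prime n)) := fun n =>
    le_of_lt (div_pos hc0 (hden _ (hπp n)))
  have hQle : ∀ n, Q n ≤ c ^ n := by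
    intro n
    induction n with
    | zero => simp [hQ0]
    | succ k ih =>
      rw [hQsucc k, pow_succ]
      exact mul_le_mul ih (hrle k) (hrnonneg k) (pow_nonneg hc0.le k)
  have hterm : ∀ p : ℕ, p.Prime → (1 - c + f p) / (1 + f p) = 1 - c / (1 + f p) := by
    intro p hp
    have h := (hden p hp).ne'
    field_simp
    ring
  have hQtend : Tendsto Q atTop (nhds 0) :=
    squeeze_zero hQnonneg hQle (tendsto_pow_atTop_nhds_zero_of_lt_one hc0.le hc1)
  -- Part 2: the sum equals 1
  have key : HasSum (fun n : ℕ =>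
      (1 - c + f (Nat.nth Nat.Prime n)) / (1 + f (Nat.nth Nat.Prime n)) * Q n) 1 := by
    rw [hasSum_iff_tendsto_nat_of_nonneg]
    · have heq : ∀ N : ℕ, ∑ k ∈ Finset.range N,
          (1 - c + f (Nat.nth Nat.Prime k)) / (1 + f (Nat.nth Nat.Prime k)) * Q k = 1 - Q N := by
        intro N
        have hstep : ∀ k, (1 - c + f (Nat.nth Nat.Prime k)) / (1 + f (Nat.nth Nat.Prime k)) * Q k
            = Q k - Q (k + 1) := by
          intro k
          rw [hterm _ (hπp k), hQsucc k]
          ring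
        calc ∑ k ∈ Finset.range N,
              (1 - c + f (Nat.nth Nat.Prime k)) / (1 + f (Nat.nth Nat.Prime k)) * Q k
            = ∑ k ∈ Finset.range N, (Q k - Q (k + 1)) := Finset.sum_congr rfl fun k _ => hstep k
          _ = Q 0 - Q N := Finset.sum_range_sub' Q N
          _ = 1 - Q N := by rw [hQ0]
      simp only [heq]
      simpa using tendsto_const_nhds.sub hQtend
    · intro n
      have h1 : 0 ≤ (1 - c + f (Nat.nth Nat.Prime n)) := by linarith [hf0 _ (hπp n)]
      exact mul_nonneg (div_nonneg h1 (hden _ (hπp n)).le) (hQnonneg n)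
  have h2 : HasSum (fun q : Nat.Primes =>
      (1 - c + f q) / (1 + f q) *
        ∏ p ∈ Finset.filter Nat.Prime (Finset.range q), c / (1 + f p)) 1 := by
    rw [← Equiv.hasSum_iff e]
    exact key
  -- Part 1: summability
  have hsum : Summable (fun n : ℕ =>
      (Nat.nth Nat.Prime n : ℝ) * (1 - c + f (Nat.nth Nat.Prime n)) /
        (1 + f (Nat.nth Nat.Prime n)) * Q n) := by
    have hcnorm : ‖c‖ < 1 := by rwa [Real.norm_eq_abs, abs_of_pos hc0]
    have hg : Summable (fun n : ℕ => (((n : ℝ) + 2) ^ 2 + 64) * c ^ n) := by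
      have ha : Summable (fun n : ℕ => (n : ℝ) ^ 2 * c ^ n) :=
        summable_pow_mul_geometric_of_norm_lt_one 2 hcnorm
      have hb : Summable (fun n : ℕ => (n : ℝ) ^ 1 * c ^ n) :=
        summable_pow_mul_geometric_of_norm_lt_one 1 hcnorm
      have hc' : Summable (fun n : ℕ => c ^ n) := summable_geometric_of_lt_one hc0.le hc1
      have := (ha.add ((hb.mul_left 4).add (hc'.mul_left 68)))
      apply this.congr
      intro n
      ring
    apply Summable.of_nonneg_of_le _ _ hg
    · intro n
      have h1 : 0 ≤ (1 - c + f (Nat.nth Nat.Prime n)) := by linarith [hf0 _ (hπp n)]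
      have := hden _ (hπp n)
      have := hQnonneg n
      positivity
    · intro n
      have hd := hden _ (hπp n)
      have h1 : 0 ≤ (1 - c + f (Nat.nth Nat.Prime n)) := by linarith [hf0 _ (hπp n)]
      have hfrac : (Nat.nth Nat.Prime n : ℝ) * (1 - c + f (Nat.nth Nat.Prime n)) /
          (1 + f (Nat.nth Nat.Prime n)) ≤ (Nat.nth Nat.Prime n : ℝ) := by
        rw [div_le_iff₀ hd]
        have : (1 - c + f (Nat.nth Nat.Prime n)) ≤ 1 + f (Nat.nth Nat.Prime n) := by linarith
        have hnn : (0:ℝ) ≤ (Nat.nth Nat.Prime n : ℝ) := Nat.cast_nonneg _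
        nlinarith
      have hnb : (Nat.nth Nat.Prime n : ℝ) ≤ ((n : ℝ) + 2) ^ 2 + 64 := by
        have := nth_prime_le n
        have : ((Nat.nth Nat.Prime n : ℕ) : ℝ) ≤ (((n + 2) ^ 2 + 64 : ℕ) : ℝ) := by
          exact_mod_cast this
        calc (Nat.nth Nat.Prime n : ℝ) ≤ (((n + 2) ^ 2 + 64 : ℕ) : ℝ) := this
          _ = ((n : ℝ) + 2) ^ 2 + 64 := by push_cast; ring
      calc (Nat.nth Nat.Prime n : ℝ) * (1 - c + f (Nat.nth Nat.Prime n)) /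
            (1 + f (Nat.nth Nat.Prime n)) * Q n
          ≤ (Nat.nth Nat.Prime n : ℝ) * c ^ n := by
            apply mul_le_mul hfrac (hQle n) (hQnonneg n) (Nat.cast_nonneg _)
        _ ≤ (((n : ℝ) + 2) ^ 2 + 64) * c ^ n :=
            mul_le_mul_of_nonneg_right hnb (pow_nonneg hc0.le n)
  have h1 : Summable (fun q : Nat.Primes =>
      (q : ℝ) * (1 - c + f q) / (1 + f q) *
        ∏ p ∈ Finset.filter Nat.Prime (Finset.range q), c / (1 + f p)) := by
    rw [← Equiv.summable_iff e]
    exact hsum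
  exact ⟨h1, h2.tsum_eq⟩
end

section
/- Suppose for each prime p an S_n-field K satisfies: p ramified or Frob_p ∉ C occurs with 'probability' (1−c+f(q))/(1+f(q)) at q independently, in the sense that the number of K ∈ L(X) with n_{K,C} = q is [(1−c+f(q))/(1+f(q))]·∏_{p<q}[c/(1+f(p))]·A·X + O(X^{(1+3δ)/4}). Then ∑_{K ∈ L(X), n_{K,C} ≤ y} n_{K,C} = A·X·∑_q q·(1−c+f(q))/(1+f(q))·∏_{p<q} c/(1+f(p)) + O(X/log X + y²X^{(1+3δ)/4} + X·∑_{q>y} q·c^{π(q)}), where y = κ·log X. -/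
open Finset Filter Real Asymptotics
open scoped Nat.Prime


lemma cheb_nat (n : ℕ) (hn : 4 ≤ n) :
    4 ^ n ≤ (2 * n) ^ (Nat.primeCounting (2 * n) + 1) := by
  have hn0 : 0 < n := by omega
  have h2n : 0 < 2 * n := by omega
  have h1 := Nat.four_pow_lt_mul_centralBinom n hn
  have h2 : Nat.centralBinom n ≤ (2 * n) ^ (Nat.primeCounting (2 * n)) := by
    conv_lhs => rw [← Nat.factorization_prod_pow_eq_self (Nat.centralBinom_ne_zero n)]
    rw [Finsupp.prod]
    have hsub : (Nat.centralBinom n).factorization.support ⊆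
        (Finset.range (2 * n + 1)).filter Nat.Prime := by
      intro p hp
      rw [Nat.support_factorization] at hp
      have hpp : p.Prime := Nat.prime_of_mem_primeFactors hp
      have hdvd : p ∣ Nat.centralBinom n := Nat.dvd_of_mem_primeFactors hp
      have hν : 1 ≤ (Nat.centralBinom n).factorization p :=
        (Nat.Prime.factorization_pos_of_dvd hpp (Nat.centralBinom_ne_zero n) hdvd)
      have hple : p ≤ 2 * n := by
        calc p = p ^ 1 := (pow_one p).symm
        _ ≤ p ^ ((Nat.centralBinom n).factorization p) :=
          Nat.pow_le_pow_right hpp.pos hν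
        _ ≤ 2 * n := by
          rw [Nat.centralBinom]
          exact Nat.pow_factorization_choose_le h2n
      simp [Finset.mem_filter, Finset.mem_range, hpp, Nat.lt_succ_of_le hple]
    calc ∏ p ∈ (Nat.centralBinom n).factorization.support,
          p ^ (Nat.centralBinom n).factorization p
        ≤ ∏ p ∈ (Finset.range (2 * n + 1)).filter Nat.Prime,
          p ^ (Nat.centralBinom n).factorization p := by
          apply Finset.prod_le_prod_of_subset_of_one_le' hsub
          intro p hp hps
          rw [Nat.support_factorization] at hps
          have : (Nat.centralBinom n).factorization p = 0 := by
            by_contra h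
            exact hps (by
              rw [Nat.mem_primeFactors]
              exact ⟨(Finset.mem_filter.mp hp).2, Nat.dvd_of_factorization_pos h,
                Nat.centralBinom_ne_zero n⟩)
          simp [this]
      _ ≤ ∏ _p ∈ (Finset.range (2 * n + 1)).filter Nat.Prime, (2 * n) := by
          apply Finset.prod_le_prod'
          intro p hp
          rw [Nat.centralBinom]
          exact Nat.pow_factorization_choose_le h2n
      _ = (2 * n) ^ ((Finset.range (2 * n + 1)).filter Nat.Prime).card :=
          (Finset.prod_const _)
      _ = (2 * n) ^ (Nat.primeCounting (2 * n)) := by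
          rw [Nat.primeCounting, Nat.primeCounting', Nat.count_eq_card_filter_range]
  calc 4 ^ n ≤ n * Nat.centralBinom n := h1.le
    _ ≤ (2 * n) * (2 * n) ^ (Nat.primeCounting (2 * n)) := by
        apply Nat.mul_le_mul (by omega) h2
    _ = (2 * n) ^ (Nat.primeCounting (2 * n) + 1) := by ring


lemma cheb_real {N : ℕ} (hN : 8 ≤ N)
    (hcheb : ∀ n : ℕ, 4 ≤ n → 4 ^ n ≤ (2 * n) ^ (Nat.primeCounting (2 * n) + 1)) :
    (N : ℝ) * Real.log 2 / 2 ≤ ((Nat.primeCounting N : ℝ) + 1) * Real.log N := by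
  set n := N / 2 with hn
  have hn4 : 4 ≤ n := by omega
  have h2n : 2 * n ≤ N ∧ N ≤ 2 * n + 1 := by omega
  have key := hcheb n hn4
  -- cast to ℝ and take logs
  have hkey : ((4:ℝ)) ^ n ≤ ((2 * n : ℕ) : ℝ) ^ (Nat.primeCounting (2 * n) + 1) := by
    exact_mod_cast Nat.cast_le.mpr key
  have hpos4 : (0:ℝ) < 4 ^ n := by positivity
  have hlog := Real.log_le_log hpos4 hkey
  rw [Real.log_pow, Real.log_pow] at hlog
  push_cast at hlog
  have hlog4 : Real.log 4 = 2 * Real.log 2 := by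
    rw [show (4:ℝ) = 2 ^ 2 by norm_num, Real.log_pow]; push_cast; ring
  have hlog2pos : 0 < Real.log 2 := Real.log_pos (by norm_num)
  have hmono : ((Nat.primeCounting (2*n) : ℝ) + 1) * Real.log (2*(n:ℝ))
      ≤ ((Nat.primeCounting N : ℝ) + 1) * Real.log N := by
    apply mul_le_mul
    · have := Nat.monotone_primeCounting h2n.1
      have := (Nat.cast_le (α := ℝ)).mpr this
      linarith
    · apply Real.log_le_log (by positivity)
      push_cast
      exact_mod_cast h2n.1
    · apply Real.log_nonneg
      have : (1:ℕ) ≤ 2*n := by omega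
      push_cast
      exact_mod_cast this
    · positivity
  have hnge : (N : ℝ) / 4 ≤ (n : ℝ) := by
    have : (N : ℝ) ≤ 2 * n + 1 := by exact_mod_cast h2n.2
    have hN8 : (8:ℝ) ≤ N := by exact_mod_cast hN
    linarith
  calc (N : ℝ) * Real.log 2 / 2 = (N / 4) * Real.log 4 := by rw [hlog4]; ring
    _ ≤ (n : ℝ) * Real.log 4 := by
        apply mul_le_mul_of_nonneg_right hnge (by rw [hlog4]; positivity)
    _ ≤ ((Nat.primeCounting (2*n) : ℝ) + 1) * Real.log (2*(n:ℝ)) := hlog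
    _ ≤ _ := hmono

lemma summable_base {c : ℝ} (hc0 : 0 < c) (hc1 : c < 1)
    (hcheb : ∀ n : ℕ, 4 ≤ n → 4 ^ n ≤ (2 * n) ^ (Nat.primeCounting (2 * n) + 1)) :
    Summable (fun N : ℕ => (N : ℝ) * c ^ Nat.primeCounting N) := by
  set L : ℝ := -Real.log c with hL
  have hLpos : 0 < L := by
    simp only [hL, neg_pos]
    exact Real.log_neg hc0 hc1
  have hlog2pos : 0 < Real.log 2 := Real.log_pos (by norm_num)
  -- little-o estimate
  have o1 : (fun x : ℝ => Real.log x * Real.log x) =o[atTop] (fun x : ℝ => x) := by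
    have h := (isLittleO_log_rpow_atTop (r := 1/2) (by norm_num)).mul
      (isLittleO_log_rpow_atTop (r := 1/2) (by norm_num))
    apply h.congr' EventuallyEq.rfl
    filter_upwards [eventually_gt_atTop (0:ℝ)] with x hx
    rw [← Real.rpow_add hx]; norm_num
  have o2 : (fun x : ℝ => 3 * (Real.log x * Real.log x) + L * Real.log x)
      =o[atTop] (fun x : ℝ => x) := by
    exact (o1.const_mul_left 3).add ((Real.isLittleO_log_id_atTop.const_mul_left L).congr'
      EventuallyEq.rfl (by filter_upwards with x; rfl))
  have ev1 : ∀ᶠ x : ℝ in atTop,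
      (3 * Real.log x + L) * Real.log x ≤ (L * Real.log 2 / 2) * x := by
    have hb := o2.bound (c := L * Real.log 2 / 2) (by positivity)
    filter_upwards [hb, eventually_ge_atTop (1:ℝ)] with x hx hx1
    have hlx : 0 ≤ Real.log x := Real.log_nonneg hx1
    have : |3 * (Real.log x * Real.log x) + L * Real.log x| ≤ (L * Real.log 2 / 2) * |x| := by
      simpa [Real.norm_eq_abs] using hx
    have hxabs : |x| = x := abs_of_nonneg (by linarith)
    rw [hxabs] at this
    calc (3 * Real.log x + L) * Real.log x = 3 * (Real.log x * Real.log x) + L * Real.log x := by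
          ring
      _ ≤ |3 * (Real.log x * Real.log x) + L * Real.log x| := le_abs_self _
      _ ≤ (L * Real.log 2 / 2) * x := this
  have ev2 : ∀ᶠ N : ℕ in atTop,
      (3 * Real.log N + L) * Real.log N ≤ (L * Real.log 2 / 2) * N :=
    tendsto_natCast_atTop_atTop.eventually ev1
  -- final eventual bound
  have evmain : ∀ᶠ N : ℕ in atTop, (N:ℝ) * c ^ Nat.primeCounting N ≤ 1 / (N:ℝ)^2 := by
    filter_upwards [ev2, eventually_ge_atTop 8] with N h1 h8
    have hN2 : (2:ℝ) ≤ N := by exact_mod_cast by omega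
    have hlogN : 0 < Real.log N := Real.log_pos (by linarith)
    have hch := cheb_real h8 hcheb
    -- 3 log N ≤ L * π N
    have h3 : 3 * Real.log N ≤ L * Nat.primeCounting N := by
      have step : (3 * Real.log N + L) * Real.log N
          ≤ L * (((Nat.primeCounting N : ℝ) + 1) * Real.log N) := by
        calc (3 * Real.log N + L) * Real.log N ≤ (L * Real.log 2 / 2) * N := h1
          _ = L * ((N:ℝ) * Real.log 2 / 2) := by ring
          _ ≤ L * (((Nat.primeCounting N : ℝ) + 1) * Real.log N) :=
            mul_le_mul_of_nonneg_left hch hLpos.le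
      have := (mul_le_mul_iff_of_pos_right hlogN).mp (by linarith [step] :
        (3 * Real.log N + L) * Real.log N ≤ (L * ((Nat.primeCounting N : ℝ) + 1)) * Real.log N)
      nlinarith
    -- conclude
    have hNpos : (0:ℝ) < N := by linarith
    have hexp : (N:ℝ)^3 * c ^ Nat.primeCounting N ≤ 1 := by
      have e1 : (N:ℝ)^3 = Real.exp (3 * Real.log N) := by
        rw [show (3:ℝ) * Real.log N = Real.log ((N:ℝ)^3) by rw [Real.log_pow]; norm_num,
          Real.exp_log (by positivity)]
      have e2 : c ^ Nat.primeCounting N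
          = Real.exp ((Nat.primeCounting N : ℝ) * Real.log c) := by
        rw [Real.exp_nat_mul, Real.exp_log hc0]
      rw [e1, e2, ← Real.exp_add, ← Real.exp_zero]
      apply Real.exp_le_exp.mpr
      have : (Nat.primeCounting N : ℝ) * Real.log c = -(L * Nat.primeCounting N) := by
        rw [hL]; ring
      rw [this]; linarith
    rw [div_eq_inv_mul, le_inv_mul_iff₀ (by positivity : (0:ℝ) < (N:ℝ)^2)]
    calc (N:ℝ)^2 * ((N:ℝ) * c ^ Nat.primeCounting N) = (N:ℝ)^3 * c ^ Nat.primeCounting N := by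
          ring
      _ ≤ 1 := hexp
  apply summable_of_isBigO_nat (summable_one_div_nat_pow.mpr (le_refl 2))
  rw [isBigO_iff]
  refine ⟨1, ?_⟩
  filter_upwards [evmain] with N hN
  have h0 : 0 ≤ (N:ℝ) * c ^ Nat.primeCounting N := by positivity
  rw [Real.norm_eq_abs, Real.norm_eq_abs, abs_of_nonneg h0, abs_of_nonneg (by positivity)]
  linarith


section helpers
variable {c Cf : ℝ} {f : ℕ → ℝ}

/-- pointwise bounds on the summand -/
lemma F_bounds (hc0 : 0 < c) (hc1 : c < 1) (hCf : 0 ≤ Cf)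
    (hf0 : ∀ p : ℕ, p.Prime → 0 ≤ f p) (hf : ∀ p : ℕ, p.Prime → f p ≤ Cf / p)
    (q : ℕ) (hq : q.Prime) :
    0 ≤ (q : ℝ) * (1 - c + f q) / (1 + f q) *
        ∏ p ∈ Finset.filter Nat.Prime (Finset.range q), c / (1 + f p) ∧
    (q : ℝ) * (1 - c + f q) / (1 + f q) *
        ∏ p ∈ Finset.filter Nat.Prime (Finset.range q), c / (1 + f p)
      ≤ ((1 + Cf) / c) * ((q : ℝ) * c ^ Nat.primeCounting q) := by
  have hfq := hf0 q hq
  have hden : (1:ℝ) ≤ 1 + f q := by linarith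
  have hq1 : (1:ℝ) ≤ (q:ℝ) := by exact_mod_cast hq.one_lt.le
  have hnum : 0 ≤ (q : ℝ) * (1 - c + f q) := by nlinarith
  have hprod_nn : 0 ≤ ∏ p ∈ Finset.filter Nat.Prime (Finset.range q), c / (1 + f p) := by
    apply Finset.prod_nonneg
    intro p hp
    have := hf0 p (Finset.mem_filter.mp hp).2
    positivity
  constructor
  · exact mul_nonneg (div_nonneg hnum (by linarith)) hprod_nn
  · have hprod_le : ∏ p ∈ Finset.filter Nat.Prime (Finset.range q), c / (1 + f p)
        ≤ c ^ ((Finset.range q).filter Nat.Prime).card := by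
      rw [← Finset.prod_const]
      apply Finset.prod_le_prod
      · intro p hp
        have := hf0 p (Finset.mem_filter.mp hp).2
        positivity
      · intro p hp
        have := hf0 p (Finset.mem_filter.mp hp).2
        rw [div_le_iff₀ (by linarith)]
        nlinarith
    have hcard : ((Finset.range q).filter Nat.Prime).card + 1 = Nat.primeCounting q := by
      rw [Nat.primeCounting, Nat.primeCounting', Nat.count_succ,
        Nat.count_eq_card_filter_range, if_pos hq]
    have hfqCf : f q ≤ Cf := (hf q hq).trans (div_le_self hCf hq1)
    calc (q : ℝ) * (1 - c + f q) / (1 + f q) *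
          ∏ p ∈ Finset.filter Nat.Prime (Finset.range q), c / (1 + f p)
        ≤ (q : ℝ) * (1 - c + f q) *
          ∏ p ∈ Finset.filter Nat.Prime (Finset.range q), c / (1 + f p) :=
          mul_le_mul_of_nonneg_right (div_le_self hnum hden) hprod_nn
      _ ≤ ((q : ℝ) * (1 + Cf)) * c ^ ((Finset.range q).filter Nat.Prime).card := by
          apply mul_le_mul (by nlinarith) hprod_le hprod_nn (by nlinarith)
      _ = ((1 + Cf) / c) * ((q : ℝ) * (c * c ^ ((Finset.range q).filter Nat.Prime).card)) := by
          field_simp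
      _ = ((1 + Cf) / c) * ((q : ℝ) * c ^ Nat.primeCounting q) := by
          rw [← hcard, pow_succ]; ring_nf

end helpers

set_option maxHeartbeats 1600000 in
/-- Abstract form of the main averaging argument: if the number of fields `K ∈ L(X)`
with `n_{K,C} = q` equals `[(1-c+f(q))/(1+f(q))]·∏_{p<q}[c/(1+f(p))]·A·X`
up to `O(X^{(1+3δ)/4})`, then with `y = κ log X`,
`∑_{K ∈ L(X), n_{K,C} ≤ y} n_{K,C} = A·X·∑_q q(1-c+f(q))/(1+f(q))∏_{p<q} c/(1+f(p))`
up to `O(X/log X + y² X^{(1+3δ)/4} + X ∑_{q>y} q c^{π(q)})`. -/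
theorem stmt_16 (ι : Type) (c δ A κ : ℝ)
    (hc0 : 0 < c) (hc1 : c < 1) (hδ0 : 0 < δ) (hδ1 : δ < 1) (hA : 0 < A) (hκ : 0 < κ)
    (f : ℕ → ℝ) (hf0 : ∀ p : ℕ, p.Prime → 0 ≤ f p)
    (Cf : ℝ) (hf : ∀ p : ℕ, p.Prime → f p ≤ Cf / p)
    (L : ℝ → Finset ι) (nC : ι → ℕ) (hn : ∀ K : ι, (nC K).Prime)
    (C₁ : ℝ)
    (hcount : ∀ X : ℝ, 2 ≤ X → ∀ q : ℕ, q.Prime →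
      |(((L X).filter (fun K => nC K = q)).card : ℝ) -
          (1 - c + f q) / (1 + f q) *
            (∏ p ∈ Finset.filter Nat.Prime (Finset.range q), c / (1 + f p)) * A * X|
        ≤ C₁ * X ^ ((1 + 3 * δ) / 4)) :
    ∃ C₂ : ℝ, ∀ X : ℝ, 2 ≤ X →
      |(∑ K ∈ (L X).filter (fun K => (nC K : ℝ) ≤ κ * Real.log X), (nC K : ℝ)) -
          A * X * ∑' q : Nat.Primes,
            (q : ℝ) * (1 - c + f q) / (1 + f q) *
              ∏ p ∈ Finset.filter Nat.Prime (Finset.range q), c / (1 + f p)|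
        ≤ C₂ * (X / Real.log X + (κ * Real.log X) ^ 2 * X ^ ((1 + 3 * δ) / 4)
            + X * ∑' q : Nat.Primes,
                (if κ * Real.log X < (q : ℝ) then (q : ℝ) * c ^ (Nat.primeCounting q) else 0)) := by
  classical
  have hlog2 : 0 < Real.log 2 := Real.log_pos (by norm_num)
  have hCf : 0 ≤ Cf := by
    have h1 := hf0 2 Nat.prime_two
    have h2 := hf 2 Nat.prime_two
    nlinarith
  have hC₁ : 0 ≤ C₁ := by
    have h := hcount 2 le_rfl 2 Nat.prime_two
    have h2 : (0:ℝ) < (2:ℝ) ^ ((1 + 3 * δ) / 4) := Real.rpow_pos_of_pos (by norm_num) _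
    nlinarith [abs_nonneg ((((L 2).filter (fun K => nC K = 2)).card : ℝ) -
      (1 - c + f 2) / (1 + f 2) *
        (∏ p ∈ Finset.filter Nat.Prime (Finset.range 2), c / (1 + f p)) * A * 2)]
  set Bc : ℝ := (1 + Cf) / c with hBc
  have hBc0 : 0 ≤ Bc := by positivity
  set c1 : ℝ := 1 + 1 / (κ * Real.log 2) with hc1def
  have hc10 : 0 ≤ c1 := by positivity
  -- summability
  have SB : Summable (fun N : ℕ => (N : ℝ) * c ^ Nat.primeCounting N) :=
    summable_base hc0 hc1 cheb_nat
  have S0 : Summable (fun q : Nat.Primes => ((q : ℕ) : ℝ) * c ^ Nat.primeCounting q) :=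
    SB.subtype _
  have SF : Summable (fun q : Nat.Primes =>
      ((q:ℕ) : ℝ) * (1 - c + f q) / (1 + f q) *
        ∏ p ∈ Finset.filter Nat.Prime (Finset.range (q:ℕ)), c / (1 + f p)) := by
    apply Summable.of_nonneg_of_le _ _ (S0.mul_left Bc)
    · intro q
      exact (F_bounds hc0 hc1 hCf hf0 hf q.1 q.2).1
    · intro q
      exact (F_bounds hc0 hc1 hCf hf0 hf q.1 q.2).2
  refine ⟨c1 * C₁ + A * Bc, ?_⟩
  intro X hX
  have hX0 : (0:ℝ) < X := by linarith
  have hlogX : 0 < Real.log X := Real.log_pos (by linarith)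
  have hlogX2 : Real.log 2 ≤ Real.log X := Real.log_le_log (by norm_num) hX
  set y : ℝ := κ * Real.log X with hy_def
  have hy : 0 < y := mul_pos hκ hlogX
  have hyge : κ * Real.log 2 ≤ y := by
    apply mul_le_mul_of_nonneg_left hlogX2 hκ.le
  have hXθ : (0:ℝ) < X ^ ((1 + 3 * δ) / 4) := Real.rpow_pos_of_pos hX0 _
  set P : Finset ℕ := (Finset.range (⌊y⌋₊ + 1)).filter Nat.Prime with hP
  have hPy : ∀ q ∈ P, (q : ℝ) ≤ y := by
    intro q hq
    rw [hP, Finset.mem_filter, Finset.mem_range] at hq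
    have : (q:ℝ) ≤ (⌊y⌋₊ : ℝ) := by exact_mod_cast Nat.lt_succ_iff.mp hq.1
    exact this.trans (Nat.floor_le hy.le)
  -- Step A : rewrite the sum over fields as a sum over primes in P
  have hstepA : (∑ K ∈ (L X).filter (fun K => (nC K : ℝ) ≤ y), (nC K : ℝ))
      = ∑ q ∈ P, (q : ℝ) * (((L X).filter (fun K => nC K = q)).card : ℝ) := by
    have hmaps : ∀ K ∈ (L X).filter (fun K => (nC K : ℝ) ≤ y), nC K ∈ P := by
      intro K hK
      rw [Finset.mem_filter] at hK
      rw [hP, Finset.mem_filter, Finset.mem_range, Nat.lt_succ_iff]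
      exact ⟨Nat.le_floor (by exact_mod_cast hK.2), hn K⟩
    rw [← Finset.sum_fiberwise_of_maps_to hmaps (fun K => (nC K : ℝ))]
    apply Finset.sum_congr rfl
    intro q hq
    have hfil : ((L X).filter (fun K => (nC K : ℝ) ≤ y)).filter (fun K => nC K = q)
        = (L X).filter (fun K => nC K = q) := by
      rw [Finset.filter_filter]
      apply Finset.filter_congr
      intro K _
      constructor
      · exact fun h => h.2
      · intro h
        exact ⟨by rw [h]; exact hPy q hq, h⟩
    rw [hfil]
    have hconst : ∑ K ∈ (L X).filter (fun K => nC K = q), ((nC K : ℝ))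
        = ∑ _K ∈ (L X).filter (fun K => nC K = q), (q : ℝ) :=
      Finset.sum_congr rfl (fun K hK => by rw [(Finset.mem_filter.mp hK).2])
    rw [hconst, Finset.sum_const, nsmul_eq_mul]
    ring
  -- Step B : estimate the finite sum via hcount
  have hstepB : |(∑ q ∈ P, (q : ℝ) * (((L X).filter (fun K => nC K = q)).card : ℝ))
      - ∑ q ∈ P, (q : ℝ) * ((1 - c + f q) / (1 + f q) *
          (∏ p ∈ Finset.filter Nat.Prime (Finset.range q), c / (1 + f p)) * A * X)|
      ≤ c1 * C₁ * (y ^ 2 * X ^ ((1 + 3 * δ) / 4)) := by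
    rw [← Finset.sum_sub_distrib]
    refine (Finset.abs_sum_le_sum_abs _ _).trans ?_
    have hterm : ∀ q ∈ P, |(q : ℝ) * (((L X).filter (fun K => nC K = q)).card : ℝ)
        - (q : ℝ) * ((1 - c + f q) / (1 + f q) *
          (∏ p ∈ Finset.filter Nat.Prime (Finset.range q), c / (1 + f p)) * A * X)|
        ≤ (q : ℝ) * (C₁ * X ^ ((1 + 3 * δ) / 4)) := by
      intro q hq
      have hqP : q.Prime := (Finset.mem_filter.mp hq).2
      rw [← mul_sub, abs_mul, abs_of_nonneg (by positivity : (0:ℝ) ≤ (q:ℝ))]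
      exact mul_le_mul_of_nonneg_left (hcount X hX q hqP) (by positivity)
    refine (Finset.sum_le_sum hterm).trans ?_
    rw [← Finset.sum_mul]
    have hsum : ∑ q ∈ P, (q : ℝ) ≤ c1 * y * y := by
      have h1 : ∑ q ∈ P, (q : ℝ) ≤ P.card • y := Finset.sum_le_card_nsmul P _ y hPy
      rw [nsmul_eq_mul] at h1
      have h2 : (P.card : ℝ) ≤ y + 1 := by
        have : P.card ≤ ⌊y⌋₊ + 1 := by
          rw [hP]
          exact (Finset.card_filter_le _ _).trans (by rw [Finset.card_range])
        have h3 : (P.card : ℝ) ≤ (⌊y⌋₊ : ℝ) + 1 := by exact_mod_cast this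
        have h4 : (⌊y⌋₊ : ℝ) ≤ y := Nat.floor_le hy.le
        linarith
      have h5 : y + 1 ≤ c1 * y := by
        rw [hc1def]
        have h6 : (1:ℝ) ≤ y / (κ * Real.log 2) :=
          (one_le_div (by positivity)).mpr hyge
        have h7 : (1 / (κ * Real.log 2)) * y = y / (κ * Real.log 2) := by ring
        nlinarith
      nlinarith [hy.le]
    have h8 : (0:ℝ) ≤ C₁ * X ^ ((1 + 3 * δ) / 4) := by positivity
    calc (∑ q ∈ P, (q:ℝ)) * (C₁ * X ^ ((1 + 3 * δ) / 4))
        ≤ (c1 * y * y) * (C₁ * X ^ ((1 + 3 * δ) / 4)) := by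
          apply mul_le_mul_of_nonneg_right hsum h8
      _ = c1 * C₁ * (y ^ 2 * X ^ ((1 + 3 * δ) / 4)) := by ring
  -- Step C : split the tsum at y
  have Stail : Summable (fun q : Nat.Primes =>
      if y < (q : ℝ) then (q : ℝ) * c ^ (Nat.primeCounting q) else 0) := by
    apply Summable.of_nonneg_of_le _ _ S0
    · intro q
      split_ifs
      · positivity
      · exact le_rfl
    · intro q
      split_ifs
      · exact le_rfl
      · positivity
  have Sf1 : Summable (fun q : Nat.Primes =>
      if (q : ℝ) ≤ y then (q : ℝ) * (1 - c + f q) / (1 + f q) *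
        ∏ p ∈ Finset.filter Nat.Prime (Finset.range q), c / (1 + f p) else 0) := by
    apply Summable.of_nonneg_of_le _ _ SF
    · intro q
      split_ifs
      · exact (F_bounds hc0 hc1 hCf hf0 hf q.1 q.2).1
      · exact le_rfl
    · intro q
      split_ifs
      · exact le_rfl
      · exact (F_bounds hc0 hc1 hCf hf0 hf q.1 q.2).1
  have Sf2 : Summable (fun q : Nat.Primes =>
      if y < (q : ℝ) then (q : ℝ) * (1 - c + f q) / (1 + f q) *
        ∏ p ∈ Finset.filter Nat.Prime (Finset.range q), c / (1 + f p) else 0) := by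
    apply Summable.of_nonneg_of_le _ _ SF
    · intro q
      split_ifs
      · exact (F_bounds hc0 hc1 hCf hf0 hf q.1 q.2).1
      · exact le_rfl
    · intro q
      split_ifs
      · exact le_rfl
      · exact (F_bounds hc0 hc1 hCf hf0 hf q.1 q.2).1
  have htsum : (∑' q : Nat.Primes,
      (q : ℝ) * (1 - c + f q) / (1 + f q) *
        ∏ p ∈ Finset.filter Nat.Prime (Finset.range q), c / (1 + f p))
      = (∑' q : Nat.Primes, if (q : ℝ) ≤ y then (q : ℝ) * (1 - c + f q) / (1 + f q) *
          ∏ p ∈ Finset.filter Nat.Prime (Finset.range q), c / (1 + f p) else 0)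
        + ∑' q : Nat.Primes, if y < (q : ℝ) then (q : ℝ) * (1 - c + f q) / (1 + f q) *
          ∏ p ∈ Finset.filter Nat.Prime (Finset.range q), c / (1 + f p) else 0 := by
    rw [← Summable.tsum_add Sf1 Sf2]
    apply tsum_congr
    intro q
    by_cases h : (q : ℝ) ≤ y
    · rw [if_pos h, if_neg (not_lt.mpr h), add_zero]
    · rw [if_neg h, if_pos (not_le.mp h), zero_add]
  have htsum1 : (∑' q : Nat.Primes, if (q : ℝ) ≤ y then (q : ℝ) * (1 - c + f q) / (1 + f q) *
          ∏ p ∈ Finset.filter Nat.Prime (Finset.range q), c / (1 + f p) else 0)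
      = ∑ q ∈ P, (q : ℝ) * (1 - c + f q) / (1 + f q) *
          ∏ p ∈ Finset.filter Nat.Prime (Finset.range q), c / (1 + f p) := by
    have e1 : (∑' q : Nat.Primes, if (q : ℝ) ≤ y then (q : ℝ) * (1 - c + f q) / (1 + f q) *
          ∏ p ∈ Finset.filter Nat.Prime (Finset.range q), c / (1 + f p) else 0)
        = ∑' n : ℕ, Set.indicator {p : ℕ | p.Prime}
            (fun n : ℕ => if (n : ℝ) ≤ y then (n : ℝ) * (1 - c + f n) / (1 + f n) *
              ∏ p ∈ Finset.filter Nat.Prime (Finset.range n), c / (1 + f p) else 0) n :=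
      _root_.tsum_subtype {p : ℕ | p.Prime}
        (fun n : ℕ => if (n : ℝ) ≤ y then (n : ℝ) * (1 - c + f n) / (1 + f n) *
          ∏ p ∈ Finset.filter Nat.Prime (Finset.range n), c / (1 + f p) else 0)
    rw [e1, tsum_eq_sum (s := P) ?_]
    · apply Finset.sum_congr rfl
      intro q hq
      have hqp : q.Prime := (Finset.mem_filter.mp hq).2
      rw [Set.indicator_of_mem (by exact hqp : q ∈ {p : ℕ | p.Prime}), if_pos (hPy q hq)]
    · intro n hn
      by_cases hnp : n.Prime
      · rw [Set.indicator_of_mem (by exact hnp : n ∈ {p : ℕ | p.Prime})]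
        apply if_neg
        apply not_le.mpr
        have hq' : ⌊y⌋₊ + 1 ≤ n := by
          by_contra hcon
          apply hn
          rw [hP, Finset.mem_filter, Finset.mem_range]
          exact ⟨by omega, hnp⟩
        calc y < (⌊y⌋₊ : ℝ) + 1 := Nat.lt_floor_add_one y
          _ ≤ (n : ℝ) := by exact_mod_cast hq'
      · exact Set.indicator_of_notMem (by exact hnp) _
  -- tail bounds
  have hT2nn : (0:ℝ) ≤ ∑' q : Nat.Primes, if y < (q : ℝ) then (q : ℝ) * (1 - c + f q) / (1 + f q) *
          ∏ p ∈ Finset.filter Nat.Prime (Finset.range q), c / (1 + f p) else 0 := by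
    apply tsum_nonneg
    intro q
    split_ifs
    · exact (F_bounds hc0 hc1 hCf hf0 hf q.1 q.2).1
    · exact le_rfl
  have hTailnn : (0:ℝ) ≤ ∑' q : Nat.Primes,
      (if y < (q : ℝ) then (q : ℝ) * c ^ (Nat.primeCounting q) else 0) := by
    apply tsum_nonneg
    intro q
    split_ifs
    · positivity
    · exact le_rfl
  have hT2le : (∑' q : Nat.Primes, if y < (q : ℝ) then (q : ℝ) * (1 - c + f q) / (1 + f q) *
          ∏ p ∈ Finset.filter Nat.Prime (Finset.range q), c / (1 + f p) else 0)
      ≤ Bc * ∑' q : Nat.Primes,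
          (if y < (q : ℝ) then (q : ℝ) * c ^ (Nat.primeCounting q) else 0) := by
    rw [← tsum_mul_left]
    apply Summable.tsum_le_tsum _ Sf2 (Stail.mul_left Bc)
    intro q
    split_ifs with h
    · exact (F_bounds hc0 hc1 hCf hf0 hf q.1 q.2).2
    · simp
  -- assemble
  rw [hstepA, htsum, htsum1, mul_add]
  have hPF : A * X * ∑ q ∈ P, (q : ℝ) * (1 - c + f q) / (1 + f q) *
        ∏ p ∈ Finset.filter Nat.Prime (Finset.range q), c / (1 + f p)
      = ∑ q ∈ P, (q : ℝ) * ((1 - c + f q) / (1 + f q) *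
          (∏ p ∈ Finset.filter Nat.Prime (Finset.range q), c / (1 + f p)) * A * X) := by
    rw [Finset.mul_sum]
    exact Finset.sum_congr rfl (fun q _ => by ring)
  rw [hPF]
  set T2 : ℝ := ∑' q : Nat.Primes, if y < (q : ℝ) then (q : ℝ) * (1 - c + f q) / (1 + f q) *
          ∏ p ∈ Finset.filter Nat.Prime (Finset.range q), c / (1 + f p) else 0 with hT2def
  set Tail : ℝ := ∑' q : Nat.Primes,
      (if y < (q : ℝ) then (q : ℝ) * c ^ (Nat.primeCounting q) else 0) with hTaildef
  have habs : |(∑ q ∈ P, (q : ℝ) * (((L X).filter (fun K => nC K = q)).card : ℝ))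
      - ((∑ q ∈ P, (q : ℝ) * ((1 - c + f q) / (1 + f q) *
          (∏ p ∈ Finset.filter Nat.Prime (Finset.range q), c / (1 + f p)) * A * X))
        + A * X * T2)|
      ≤ c1 * C₁ * (y ^ 2 * X ^ ((1 + 3 * δ) / 4)) + A * X * T2 := by
    have := abs_sub (a := (∑ q ∈ P, (q : ℝ) * (((L X).filter (fun K => nC K = q)).card : ℝ))
      - ∑ q ∈ P, (q : ℝ) * ((1 - c + f q) / (1 + f q) *
          (∏ p ∈ Finset.filter Nat.Prime (Finset.range q), c / (1 + f p)) * A * X))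
    calc |(∑ q ∈ P, (q : ℝ) * (((L X).filter (fun K => nC K = q)).card : ℝ))
      - ((∑ q ∈ P, (q : ℝ) * ((1 - c + f q) / (1 + f q) *
          (∏ p ∈ Finset.filter Nat.Prime (Finset.range q), c / (1 + f p)) * A * X))
        + A * X * T2)|
        = |((∑ q ∈ P, (q : ℝ) * (((L X).filter (fun K => nC K = q)).card : ℝ))
          - (∑ q ∈ P, (q : ℝ) * ((1 - c + f q) / (1 + f q) *
            (∏ p ∈ Finset.filter Nat.Prime (Finset.range q), c / (1 + f p)) * A * X)))
          + (- (A * X * T2))| := by congr 1; ring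
      _ ≤ |(∑ q ∈ P, (q : ℝ) * (((L X).filter (fun K => nC K = q)).card : ℝ))
          - (∑ q ∈ P, (q : ℝ) * ((1 - c + f q) / (1 + f q) *
            (∏ p ∈ Finset.filter Nat.Prime (Finset.range q), c / (1 + f p)) * A * X))|
          + |(- (A * X * T2))| := abs_add_le _ _
      _ ≤ c1 * C₁ * (y ^ 2 * X ^ ((1 + 3 * δ) / 4)) + A * X * T2 := by
          rw [abs_neg, abs_of_nonneg (mul_nonneg (mul_nonneg hA.le hX0.le) hT2nn)]
          exact add_le_add_left hstepB _
  clear_value T2 Tail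
  have ht1 : (0:ℝ) ≤ X / Real.log X := by positivity
  have ht2 : (0:ℝ) ≤ y ^ 2 * X ^ ((1 + 3 * δ) / 4) := by positivity
  have ht3 : (0:ℝ) ≤ X * Tail := mul_nonneg hX0.le hTailnn
  have hAXT2 : A * X * T2 ≤ (A * Bc) * (X * Tail) := by
    calc A * X * T2 ≤ A * X * (Bc * Tail) :=
        mul_le_mul_of_nonneg_left hT2le (by positivity)
      _ = (A * Bc) * (X * Tail) := by ring
  have h1 : (0:ℝ) ≤ c1 * C₁ := mul_nonneg hc10 hC₁
  have h2 : (0:ℝ) ≤ A * Bc := mul_nonneg hA.le hBc0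
  refine habs.trans ?_
  generalize hg1 : X / Real.log X = t1 at ht1 ⊢
  generalize hg2 : y ^ 2 * X ^ ((1 + 3 * δ) / 4) = t2 at ht2 habs ⊢
  generalize hg3 : X * Tail = t3 at ht3 hAXT2 ⊢
  have hexp : (c1 * C₁ + A * Bc) * (t1 + t2 + t3)
      = c1 * C₁ * t2 + (A * Bc) * t3
        + ((c1 * C₁) * t1 + (c1 * C₁) * t3 + (A * Bc) * t1 + (A * Bc) * t2) := by
    ring
  rw [hexp]
  have h3 := mul_nonneg h1 ht1
  have h4 := mul_nonneg h1 ht3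
  have h5 := mul_nonneg h2 ht1
  have h6 := mul_nonneg h2 ht2
  linarith [hAXT2]
end

section
/- Let F be a real-valued function on (1, 3/2] satisfying F(σ) = ∑_{p<N} 2(log p)/p^σ ≤ 1/(σ−1) + B for all σ ∈ (1, 3/2], where N ≥ 3 and B > 0. Then log N ≤ (B + C)/A where A = sup_{λ>0} (1−2e^{−λ})/λ and C is an absolute constant; in particular N ≤ exp((B+C)/A). -/
/-- The constant `A = sup_{λ>0} (1 - 2e^{-λ})/λ`. -/
noncomputable def constA : ℝ := sSup {x : ℝ | ∃ l : ℝ, 0 < l ∧ x = (1 - 2 * Real.exp (-l)) / l}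

/-- The finset of primes `p < N` for a real bound `N`. -/
noncomputable def primesLtR (N : ℝ) : Finset ℕ :=
  (Finset.range ⌈N⌉₊).filter (fun p => Nat.Prime p ∧ (p : ℝ) < N)

section Aux
open Finset ArithmeticFunction



lemma sum_log_range (n : ℕ) :
    (n : ℝ) * Real.log n - n ≤ ∑ m ∈ Finset.range (n+1), Real.log m := by
  induction n with
  | zero => simp
  | succ n ih =>
    rw [Finset.sum_range_succ]
    have key : ((n:ℝ)+1) * Real.log (n+1) - ((n:ℝ)+1) - Real.log (n+1)
        ≤ (n:ℝ) * Real.log n - n := by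
      have h1 : (n:ℝ) * (Real.log (n+1) - Real.log n) ≤ 1 := by
        rcases Nat.eq_zero_or_pos n with h | h
        · simp [h]
        · have hn : (0:ℝ) < n := by exact_mod_cast h
          have : Real.log ((n+1)/n) ≤ ((n:ℝ)+1)/n - 1 :=
            Real.log_le_sub_one_of_pos (by positivity)
          rw [Real.log_div (by positivity) (by positivity)] at this
          have h2 : ((n:ℝ)+1)/n - 1 = 1/n := by field_simp; ring
          rw [h2] at this
          calc (n:ℝ) * (Real.log (n+1) - Real.log n) ≤ (n:ℝ) * (1/n) :=
                mul_le_mul_of_nonneg_left this (le_of_lt hn)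
            _ = 1 := by field_simp
      nlinarith [h1]
    push_cast
    linarith [key, ih]


lemma sum_log_le (n : ℕ) :
    ∑ m ∈ Finset.range (n+1), Real.log m
      ≤ (n : ℝ) * ∑ d ∈ Finset.range (n+1), Λ d / d := by
  have step1 : ∀ m ∈ Finset.range (n+1),
      Real.log m = ∑ d ∈ Finset.range (n+1), if d ∈ m.divisors then Λ d else 0 := by
    intro m hm
    rw [Finset.sum_ite_mem]
    have hsub : m.divisors ⊆ Finset.range (n+1) := by
      intro d hd
      rw [Nat.mem_divisors] at hd
      have := Nat.le_of_dvd (Nat.pos_of_ne_zero hd.2) hd.1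
      have hmn : m ≤ n := Nat.lt_succ_iff.mp (Finset.mem_range.mp hm)
      exact Finset.mem_range.mpr (Nat.lt_succ_iff.mpr (this.trans hmn))
    rw [Finset.inter_eq_right.mpr hsub, ArithmeticFunction.vonMangoldt_sum]
  rw [Finset.sum_congr rfl step1, Finset.sum_comm, Finset.mul_sum]
  have step2 : ∀ d ∈ Finset.range (n+1),
      (∑ m ∈ Finset.range (n+1), if d ∈ m.divisors then Λ d else 0)
        ≤ (n : ℝ) * (Λ d / d) := by
    intro d _
    rw [Finset.sum_ite, Finset.sum_const_zero, add_zero, Finset.sum_const,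
      nsmul_eq_mul]
    have hcard : (Finset.range (n+1)).filter (fun m => d ∈ m.divisors)
        = (Finset.Ioc 0 n).filter (d ∣ ·) := by
      ext m
      simp only [Finset.mem_filter, Finset.mem_range, Finset.mem_Ioc,
        Nat.mem_divisors, Nat.lt_succ_iff]
      constructor
      · rintro ⟨h1, h2, h3⟩; exact ⟨⟨Nat.pos_of_ne_zero h3, h1⟩, h2⟩
      · rintro ⟨⟨h1, h2⟩, h3⟩; exact ⟨h2, h3, h1.ne'⟩
    rw [hcard, Nat.Ioc_filter_dvd_card_eq_div]
    calc ((n / d : ℕ) : ℝ) * Λ d ≤ ((n : ℝ) / d) * Λ d :=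
          mul_le_mul_of_nonneg_right Nat.cast_div_le vonMangoldt_nonneg
      _ = (n : ℝ) * (Λ d / d) := by ring
  exact Finset.sum_le_sum step2

lemma tel_aux (n : ℕ) (hn : 1 ≤ n) :
    ∑ m ∈ Finset.Ico 2 (n+1), 4/((m:ℝ) * Real.sqrt m) ≤ 8 - 8/Real.sqrt n := by
  induction n with
  | zero => omega
  | succ n ih =>
    rcases Nat.eq_zero_or_pos n with h | h
    · subst h; norm_num
    · have hrec := ih h
      rw [Finset.sum_Ico_succ_top (by omega)]
      have ha : (0:ℝ) < Real.sqrt n := Real.sqrt_pos.mpr (by exact_mod_cast h)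
      have hb : (0:ℝ) < Real.sqrt (n+1) := Real.sqrt_pos.mpr (by positivity)
      have ha2 : Real.sqrt n ^ 2 = (n:ℝ) := Real.sq_sqrt (by positivity)
      have hb2 : Real.sqrt (n+1) ^ 2 = (n:ℝ)+1 := by
        rw [Real.sq_sqrt (by positivity)]
      have hab : Real.sqrt n ≤ Real.sqrt (n+1) := Real.sqrt_le_sqrt (by linarith)
      have key : 4/(((n:ℝ)+1) * Real.sqrt (n+1))
          ≤ 8/Real.sqrt n - 8/Real.sqrt (n+1) := by
        rw [div_sub_div _ _ (ne_of_gt ha) (ne_of_gt hb), div_le_div_iff₀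
          (by positivity) (by positivity)]
        nlinarith [mul_pos ha hb, sq_nonneg (Real.sqrt (n+1) - Real.sqrt n),
          mul_pos (mul_pos ha hb) hb]
      have hcast : ((n:ℝ)+1) = ((n+1 : ℕ) : ℝ) := by push_cast; ring
      rw [← hcast] at *
      push_cast
      linarith

lemma geom_inner (p n : ℕ) (hp : 2 ≤ p) :
    ∑ k ∈ Finset.Ico 2 (n+1), ((1:ℝ)/p)^k ≤ 2/(p:ℝ)^2 := by
  have hp0 : (0:ℝ) < p := by positivity
  have hx0 : (0:ℝ) < 1/(p:ℝ) := by positivity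
  have hx : (1:ℝ)/p ≤ 1/2 := by
    apply div_le_div_of_nonneg_left (by norm_num) (by norm_num) (by exact_mod_cast hp)
  rcases le_or_gt (n+1) 2 with h | h
  · rw [Finset.Ico_eq_empty (by omega)]
    simp; positivity
  · rw [geom_sum_Ico' (by linarith : (1:ℝ)/p ≠ 1) (by omega)]
    have h1 : (1:ℝ) - 1/p ≥ 1/2 := by linarith
    have h2 : ((1:ℝ)/p)^2 - ((1:ℝ)/p)^(n+1) ≤ ((1:ℝ)/p)^2 := sub_le_self _ (by positivity)
    have h3 : ((1:ℝ)/p)^2 = 1/(p:ℝ)^2 := by field_simp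
    calc (((1:ℝ)/p)^2 - ((1:ℝ)/p)^(n+1)) / (1 - 1/p)
        ≤ ((1:ℝ)/p)^2 / (1/2) := by
          apply div_le_div₀ (by positivity) h2 (by norm_num) h1
      _ = 2/(p:ℝ)^2 := by rw [h3]; ring

lemma log_le_two_sqrt {p : ℕ} (hp : 2 ≤ p) : Real.log p ≤ 2 * Real.sqrt p := by
  have h0 : (0:ℝ) < p := by positivity
  have h1 : Real.log p = 2 * Real.log (Real.sqrt p) := by
    rw [Real.log_sqrt (le_of_lt h0)]; ring
  have h2 : Real.log (Real.sqrt p) ≤ Real.sqrt p - 1 :=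
    Real.log_le_sub_one_of_pos (Real.sqrt_pos.mpr h0)
  linarith

lemma per_prime {p : ℕ} (hp : 2 ≤ p) :
    Real.log p * (2/(p:ℝ)^2) ≤ 4/((p:ℝ) * Real.sqrt p) := by
  have h0 : (0:ℝ) < p := by positivity
  have hs : (0:ℝ) < Real.sqrt p := Real.sqrt_pos.mpr h0
  have hs2 : Real.sqrt p * Real.sqrt p = (p:ℝ) := Real.mul_self_sqrt (le_of_lt h0)
  have h1 := log_le_two_sqrt hp
  rw [show Real.log p * (2/(p:ℝ)^2) = (2*Real.log p)/(p:ℝ)^2 by ring,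
    div_le_div_iff₀ (by positivity) (by positivity)]
  nlinarith [mul_le_mul_of_nonneg_right h1 (le_of_lt (mul_pos h0 hs))]

-- rewriting of the vonMangoldt value at a non-prime prime power
lemma nonprime_pp {d : ℕ} (hd : ¬ d.Prime) (hΛ : Λ d ≠ 0) :
    d.minFac.Prime ∧ 2 ≤ d.factorization d.minFac ∧
      d.minFac ^ (d.factorization d.minFac) = d ∧
      Λ d = Real.log d.minFac := by
  obtain ⟨p, k, hp, hk, rfl⟩ := ArithmeticFunction.vonMangoldt_ne_zero_iff.mp hΛ
  have hp' : p.Prime := hp.nat_prime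
  have hmf : (p ^ k).minFac = p := hp'.pow_minFac (by omega)
  have hfac : (p ^ k).factorization p = k := by
    rw [hp'.factorization_pow]; simp
  have hk2 : 2 ≤ k := by
    rcases Nat.lt_or_ge k 2 with h | h
    · have hk1 : k = 1 := by omega
      subst hk1
      rw [pow_one] at hd
      exact absurd hp' hd
    · exact h
  refine ⟨by rw [hmf]; exact hp', ?_, ?_, ?_⟩
  · rw [hmf, hfac]; exact hk2
  · rw [hmf, hfac]
  · rw [hmf, ArithmeticFunction.vonMangoldt_apply_pow (by omega),
      ArithmeticFunction.vonMangoldt_apply_prime hp']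

lemma tel (n : ℕ) : ∑ m ∈ Finset.Ico 2 (n+1), 4/((m:ℝ) * Real.sqrt m) ≤ 8 := by
  rcases Nat.eq_zero_or_pos n with h | h
  · subst h; simp
  · have := tel_aux n h
    have h2 : (0:ℝ) < Real.sqrt n := Real.sqrt_pos.mpr (by positivity)
    have h3 : 0 < 8/Real.sqrt n := by positivity
    linarith

lemma vm_correction (n : ℕ) :
    ∑ d ∈ Finset.range (n+1), Λ d / d
      ≤ (∑ p ∈ (Finset.range (n+1)).filter Nat.Prime, Real.log p / p) + 8 := by
  classical
  rw [← Finset.sum_filter_add_sum_filter_not (Finset.range (n+1)) Nat.Prime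
    (fun d => Λ d / (d:ℝ))]
  have hprime : ∑ d ∈ (Finset.range (n+1)).filter Nat.Prime, Λ d / (d:ℝ)
      = ∑ p ∈ (Finset.range (n+1)).filter Nat.Prime, Real.log p / p := by
    apply Finset.sum_congr rfl
    intro p hp
    rw [ArithmeticFunction.vonMangoldt_apply_prime (Finset.mem_filter.mp hp).2]
  rw [hprime]
  have hNP : ∑ d ∈ (Finset.range (n+1)).filter (fun d => ¬ d.Prime), Λ d / (d:ℝ) ≤ 8 := by
    set w : ℕ × ℕ → ℝ := fun q =>
      if q.1.Prime ∧ 2 ≤ q.2 then Real.log q.1 / (q.1:ℝ)^q.2 else 0 with hw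
    set e : ℕ → ℕ × ℕ := fun d => (d.minFac, d.factorization d.minFac) with he
    set A := ((Finset.range (n+1)).filter (fun d => ¬ d.Prime)).filter
      (fun d => Λ d ≠ 0) with hA
    have hstep0 : ∑ d ∈ (Finset.range (n+1)).filter (fun d => ¬ d.Prime), Λ d / (d:ℝ)
        = ∑ d ∈ A, Λ d / (d:ℝ) := by
      rw [hA]
      refine (Finset.sum_filter_of_ne ?_).symm
      intro d _ hd
      intro h0
      rw [h0] at hd; simp at hd
    rw [hstep0]
    have hfacts : ∀ d ∈ A, d.minFac.Prime ∧ 2 ≤ d.factorization d.minFac ∧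
        d.minFac ^ (d.factorization d.minFac) = d ∧ Λ d = Real.log d.minFac := by
      intro d hd
      rw [hA, Finset.mem_filter, Finset.mem_filter] at hd
      exact nonprime_pp hd.1.2 hd.2
    have hdpos : ∀ d ∈ A, 0 < d ∧ d ≤ n := by
      intro d hd
      obtain ⟨h1, _, h3, _⟩ := hfacts d hd
      rw [hA, Finset.mem_filter, Finset.mem_filter, Finset.mem_range] at hd
      constructor
      · rw [← h3]; exact pow_pos h1.pos _
      · omega
    have hstep1 : ∑ d ∈ A, Λ d / (d:ℝ) = ∑ d ∈ A, w (e d) := by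
      apply Finset.sum_congr rfl
      intro d hd
      obtain ⟨h1, h2, h3, h4⟩ := hfacts d hd
      rw [hw, he]
      simp only []
      rw [if_pos ⟨h1, h2⟩, h4]
      congr 1
      rw [← Nat.cast_pow, h3]
    have hinj : ∀ x ∈ A, ∀ y ∈ A, e x = e y → x = y := by
      intro x hx y hy hxy
      obtain ⟨_, _, hx3, _⟩ := hfacts x hx
      obtain ⟨_, _, hy3, _⟩ := hfacts y hy
      rw [he] at hxy
      simp only [Prod.mk.injEq] at hxy
      refine hx3.symm.trans (Eq.trans ?_ hy3)
      rw [hxy.2, hxy.1]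
    have himg : ∑ q ∈ A.image e, w q = ∑ d ∈ A, w (e d) := Finset.sum_image hinj
    rw [hstep1, ← himg]
    have hw0 : ∀ q : ℕ × ℕ, 0 ≤ w q := by
      intro q
      rw [hw]
      dsimp only
      split
      · rename_i h
        have := h.1.two_le
        have h1 : (1:ℝ) ≤ q.1 := by exact_mod_cast Nat.one_le_iff_ne_zero.mpr (by omega)
        have := Real.log_nonneg h1
        positivity
      · exact le_refl 0
    have hsub : A.image e ⊆ (Finset.range (n+1)) ×ˢ (Finset.range (n+1)) := by
      intro q hq
      obtain ⟨d, hd, rfl⟩ := Finset.mem_image.mp hq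
      obtain ⟨h1, h2, h3, _⟩ := hfacts d hd
      obtain ⟨hd0, hdn⟩ := hdpos d hd
      rw [Finset.mem_product, he]
      constructor
      · simp only [Finset.mem_range]
        have := Nat.minFac_le hd0
        omega
      · simp only [Finset.mem_range]
        set k := d.factorization d.minFac
        have hk1 : k < 2^k := Nat.lt_two_pow_self
        have hk2 : 2^k ≤ d.minFac^k := Nat.pow_le_pow_left h1.two_le k
        omega
    calc ∑ q ∈ A.image e, w q
        ≤ ∑ q ∈ (Finset.range (n+1)) ×ˢ (Finset.range (n+1)), w q :=
          Finset.sum_le_sum_of_subset_of_nonneg hsub (fun q _ _ => hw0 q)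
      _ = ∑ p ∈ Finset.range (n+1), ∑ k ∈ Finset.range (n+1), w (p, k) :=
          by rw [Finset.sum_product]
      _ ≤ ∑ p ∈ Finset.range (n+1),
            (if p.Prime then 4/((p:ℝ) * Real.sqrt p) else 0) := by
          apply Finset.sum_le_sum
          intro p _
          by_cases hp : p.Prime
          · rw [if_pos hp]
            have hrw : ∀ k ∈ Finset.range (n+1),
                w (p, k) = if 2 ≤ k then Real.log p * ((1:ℝ)/p)^k else 0 := by
              intro k _
              rw [hw]
              simp only [hp, true_and]
              congr 1
              rw [one_div, inv_pow, div_eq_mul_inv]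
            rw [Finset.sum_congr rfl hrw, ← Finset.sum_filter]
            have hIco : (Finset.range (n+1)).filter (fun k => 2 ≤ k)
                = Finset.Ico 2 (n+1) := by
              ext k
              simp only [Finset.mem_filter, Finset.mem_range, Finset.mem_Ico]
              omega
            rw [hIco, ← Finset.mul_sum]
            have hlog : (0:ℝ) ≤ Real.log p := by
              apply Real.log_nonneg
              exact_mod_cast hp.one_lt.le
            calc Real.log p * ∑ k ∈ Finset.Ico 2 (n+1), ((1:ℝ)/p)^k
                ≤ Real.log p * (2/(p:ℝ)^2) :=
                  mul_le_mul_of_nonneg_left (geom_inner p n hp.two_le) hlog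
              _ ≤ 4/((p:ℝ) * Real.sqrt p) := per_prime hp.two_le
          · rw [if_neg hp]
            apply le_of_eq
            apply Finset.sum_eq_zero
            intro k _
            rw [hw]
            simp [hp]
      _ = ∑ p ∈ (Finset.range (n+1)).filter Nat.Prime, 4/((p:ℝ) * Real.sqrt p) :=
          (Finset.sum_filter _ _).symm
      _ ≤ ∑ m ∈ Finset.Ico 2 (n+1), 4/((m:ℝ) * Real.sqrt m) := by
          apply Finset.sum_le_sum_of_subset_of_nonneg
          · intro p hp
            rw [Finset.mem_filter, Finset.mem_range] at hp
            rw [Finset.mem_Ico]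
            exact ⟨hp.2.two_le, hp.1⟩
          · intro m hm _
            have : 2 ≤ m := (Finset.mem_Ico.mp hm).1
            have h0 : (0:ℝ) < m := by exact_mod_cast Nat.lt_of_lt_of_le Nat.zero_lt_two this
            have := Real.sqrt_pos.mpr h0
            positivity
      _ ≤ 8 := tel n
  linarith

lemma mertens_lower (n : ℕ) (hn : 1 ≤ n) :
    Real.log n - 9 ≤ ∑ p ∈ (Finset.range (n+1)).filter Nat.Prime, Real.log p / p := by
  have h1 := sum_log_range n
  have h2 := sum_log_le n
  have h3 := vm_correction n
  have hn0 : (0:ℝ) < n := by exact_mod_cast hn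
  nlinarith [mul_le_mul_of_nonneg_left h3 hn0.le]

lemma tele (f : ℕ → ℝ) : ∀ a b : ℕ, a ≤ b →
    ∑ n ∈ Finset.Ico a b, (f n - f (n+1)) = f a - f b := by
  intro a b hab
  induction b with
  | zero => interval_cases a; simp
  | succ b ih =>
    rcases Nat.lt_or_ge a (b+1) with h | h
    · have hab' : a ≤ b := by omega
      rw [Finset.sum_Ico_succ_top hab', ih hab']
      ring
    · have : a = b + 1 := by omega
      subst this; simp

lemma triangle_swap (c d : ℕ → ℝ) (a b : ℕ) :
    ∑ n ∈ Finset.Ico a b, c n * ∑ m ∈ Finset.Ico a (n+1), d m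
      = ∑ m ∈ Finset.Ico a b, d m * ∑ n ∈ Finset.Ico m b, c n := by
  have lhs_eq : ∀ n ∈ Finset.Ico a b,
      c n * ∑ m ∈ Finset.Ico a (n+1), d m
        = ∑ m ∈ Finset.Ico a b, (if m ≤ n then c n * d m else 0) := by
    intro n hn
    rw [Finset.mem_Ico] at hn
    rw [Finset.mul_sum, ← Finset.sum_filter]
    apply Finset.sum_congr
    · ext m
      simp only [Finset.mem_Ico, Finset.mem_filter]
      omega
    · intros; rfl
  rw [Finset.sum_congr rfl lhs_eq, Finset.sum_comm]
  apply Finset.sum_congr rfl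
  intro m hm
  rw [Finset.mem_Ico] at hm
  rw [Finset.mul_sum, ← Finset.sum_filter]
  apply Finset.sum_congr
  · ext n
    simp only [Finset.mem_Ico, Finset.mem_filter]
    omega
  · intro n hn
    ring

lemma tele_log : ∀ n : ℕ, 2 ≤ n →
    ∑ m ∈ Finset.Ico 3 (n+1), (Real.log m - Real.log (m-1 : ℕ)) =
      Real.log n - Real.log 2 := by
  intro n hn
  induction n with
  | zero => omega
  | succ n ih =>
    rcases Nat.lt_or_ge n 2 with h | h
    · have : n = 1 := by omega
      subst this
      norm_num
    · rw [Finset.sum_Ico_succ_top (by omega), ih h]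
      have : (n + 1 - 1 : ℕ) = n := by omega
      rw [this]
      push_cast
      ring

lemma rpow_anti {s x y : ℝ} (hs : 0 ≤ s) (hx : 0 < x) (hxy : x ≤ y) :
    y ^ (-s) ≤ x ^ (-s) := by
  have hy : (0:ℝ) < y := lt_of_lt_of_le hx hxy
  rw [Real.rpow_neg hx.le, Real.rpow_neg hy.le]
  apply inv_anti₀
  · exact Real.rpow_pos_of_pos hx s
  · exact Real.rpow_le_rpow (le_of_lt hx) hxy hs

lemma rpow_diff {s : ℝ} (hs0 : 0 < s) (hs1 : s ≤ 1) (n : ℕ) (hn : 1 ≤ n) :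
    (n:ℝ)^(-s) - ((n:ℝ)+1)^(-s) ≤ s * (n:ℝ)^(-s) / n := by
  have hn0 : (0:ℝ) < n := by exact_mod_cast hn
  have hsplit : ((n:ℝ)+1)^(-s) = (n:ℝ)^(-s) * (((n:ℝ)+1)/n)^(-s) := by
    rw [← Real.mul_rpow (by positivity) (by positivity)]
    congr 1
    field_simp
  have hlog : Real.log (((n:ℝ)+1)/n) ≤ 1/n := by
    have := Real.log_le_sub_one_of_pos (show (0:ℝ) < ((n:ℝ)+1)/n by positivity)
    have heq : ((n:ℝ)+1)/n - 1 = 1/n := by field_simp; ring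
    linarith
  have hexp : (((n:ℝ)+1)/n)^(-s) ≥ 1 - s * (1/n) := by
    rw [Real.rpow_def_of_pos (by positivity)]
    have h1 : 1 + (-s * Real.log (((n:ℝ)+1)/n)) ≤ Real.exp (-s * Real.log (((n:ℝ)+1)/n)) := by
      linarith [Real.add_one_le_exp (-s * Real.log (((n:ℝ)+1)/n))]
    have h2 : -s * Real.log (((n:ℝ)+1)/n) ≥ -s * (1/n) :=
      neg_mul_comm s _ ▸ by nlinarith
    calc (1:ℝ) - s * (1/n) = 1 + (-s * (1/n)) := by ring
      _ ≤ 1 + (-s * Real.log (((n:ℝ)+1)/n)) := by linarith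
      _ ≤ Real.exp (Real.log (((n:ℝ)+1)/n) * (-s)) := by
          rw [mul_comm (Real.log (((n:ℝ)+1)/n)) (-s)]; linarith [h1]
  have hf0 : (0:ℝ) < (n:ℝ)^(-s) := Real.rpow_pos_of_pos hn0 _
  calc (n:ℝ)^(-s) - ((n:ℝ)+1)^(-s)
      = (n:ℝ)^(-s) * (1 - (((n:ℝ)+1)/n)^(-s)) := by rw [hsplit]; ring
    _ ≤ (n:ℝ)^(-s) * (s * (1/n)) := by nlinarith
    _ = s * (n:ℝ)^(-s) / n := by ring

lemma log_diff_ge (m : ℕ) (hm : 2 ≤ m) :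
    1/(m:ℝ) ≤ Real.log m - Real.log ((m-1 : ℕ) : ℝ) := by
  have hm0 : (0:ℝ) < m := by positivity
  have hm1 : (0:ℝ) < ((m-1:ℕ):ℝ) := by
    have : 1 ≤ m - 1 := by omega
    exact_mod_cast Nat.lt_of_lt_of_le Nat.zero_lt_one this
  have hcast : ((m-1:ℕ):ℝ) = (m:ℝ) - 1 := by
    have : 1 ≤ m := by omega
    push_cast [this]
    ring
  have h1 : Real.log (((m-1:ℕ):ℝ)/m) ≤ ((m:ℝ)-1)/m - 1 := by
    have := Real.log_le_sub_one_of_pos (show (0:ℝ) < ((m-1:ℕ):ℝ)/m by positivity)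
    rw [hcast] at this ⊢
    exact this
  rw [Real.log_div (by linarith) (by linarith)] at h1
  have : ((m:ℝ)-1)/m - 1 = -(1/m) := by field_simp; ring
  rw [this] at h1
  linarith

lemma primesLtR_eq (N : ℝ) (hN : 3 ≤ N) :
    primesLtR N = (Finset.range ⌈N⌉₊).filter Nat.Prime := by
  unfold primesLtR
  apply Finset.filter_congr
  intro p hp
  rw [Finset.mem_range] at hp
  simp only [and_iff_left_iff_imp]
  intro _
  have h1 : (p:ℝ) ≤ (⌈N⌉₊:ℝ) - 1 := by
    have : p + 1 ≤ ⌈N⌉₊ := hp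
    have := (Nat.cast_le (α := ℝ)).mpr this
    push_cast at this
    linarith
  have h2 : (⌈N⌉₊:ℝ) < N + 1 := Nat.ceil_lt_add_one (by linarith)
  linarith


lemma rpow_exp_low (x s : ℝ) (hx : 0 < x) : 1 - s * Real.log x ≤ x^(-s) := by
  rw [Real.rpow_def_of_pos hx]
  have := Real.add_one_le_exp (Real.log x * (-s))
  nlinarith [this]

lemma twothirds (s : ℝ) (hs0 : 0 < s) (hs1 : s ≤ 1/2) : (2/3:ℝ)^(-s) ≤ 1 + s := by
  rw [Real.rpow_def_of_pos (by norm_num)]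
  have hlog23 : Real.log (2/3:ℝ) = -Real.log (3/2:ℝ) := by
    rw [show (2/3:ℝ) = (3/2:ℝ)⁻¹ by norm_num, Real.log_inv]
  have hlog32 : Real.log (3/2:ℝ) ≤ 1/2 := by
    have := Real.log_le_sub_one_of_pos (show (0:ℝ) < 3/2 by norm_num)
    linarith
  have hlog32' : 0 < Real.log (3/2:ℝ) := Real.log_pos (by norm_num)
  rw [hlog23]
  set t := Real.log (3/2:ℝ)
  have hst : s * t ≤ 1/4 := by nlinarith
  have hst0 : 0 < s * t := mul_pos hs0 hlog32'
  have hen : 1 - s*t ≤ Real.exp (-(s*t)) := by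
    have := Real.add_one_le_exp (-(s*t))
    linarith
  have hpos : (0:ℝ) < 1 - s*t := by linarith
  have hinv : Real.exp (s*t) ≤ 1/(1 - s*t) := by
    rw [le_div_iff₀ hpos]
    calc Real.exp (s*t) * (1 - s*t) ≤ Real.exp (s*t) * Real.exp (-(s*t)) := by
          apply mul_le_mul_of_nonneg_left hen (Real.exp_nonneg _)
      _ = 1 := by rw [← Real.exp_add]; simp
  have hfin : 1/(1 - s*t) ≤ 1 + s := by
    rw [div_le_iff₀ hpos]
    nlinarith
  calc Real.exp (-t * (-s)) = Real.exp (s*t) := by ring_nf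
    _ ≤ 1/(1-s*t) := hinv
    _ ≤ 1 + s := hfin

lemma key_lemma (N : ℝ) (hN : 3 ≤ N) (s : ℝ) (hs0 : 0 < s) (hs1 : s ≤ 1/2) :
    (1 - N^(-s))/s - 12 ≤ ∑ p ∈ primesLtR N, (Real.log p / p) * (p:ℝ)^(-s) := by
  classical
  set c : ℕ → ℝ := fun n => if n.Prime then Real.log n / n else 0 with hc
  set f : ℕ → ℝ := fun n => (n:ℝ)^(-s) with hf
  set M : ℕ → ℝ := fun n => ∑ m ∈ Finset.range (n+1), c m with hM
  have hN0 : (0:ℝ) < N := by linarith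
  have hKN : N ≤ (⌈N⌉₊:ℝ) := Nat.le_ceil N
  have hK3 : 3 ≤ ⌈N⌉₊ := by
    by_contra h
    push_neg at h
    have : (⌈N⌉₊:ℝ) ≤ 2 := by exact_mod_cast Nat.lt_succ_iff.mp h
    linarith
  obtain ⟨L, hL⟩ : ∃ L, ⌈N⌉₊ = L + 1 := ⟨⌈N⌉₊ - 1, by omega⟩
  have hL2 : 2 ≤ L := by omega
  -- rewrite the sum
  have hT : ∑ p ∈ primesLtR N, (Real.log p / p) * (p:ℝ)^(-s)
      = ∑ n ∈ Finset.range (L+1), c n * f n := by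
    rw [primesLtR_eq N hN, hL, Finset.sum_filter]
    apply Finset.sum_congr rfl
    intro n _
    rw [hc, hf]
    by_cases h : n.Prime <;> simp [h]
  rw [hT]
  -- facts
  have hc0 : ∀ n, 0 ≤ c n := by
    intro n
    rw [hc]
    dsimp only
    split
    · rename_i h
      have h1 : (1:ℝ) ≤ n := by exact_mod_cast h.one_lt.le
      have := Real.log_nonneg h1
      positivity
    · exact le_rfl
  have hfpos : ∀ n : ℕ, 1 ≤ n → 0 < f n := by
    intro n hn
    rw [hf]
    exact Real.rpow_pos_of_pos (by exact_mod_cast hn) _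
  have hg0 : ∀ n : ℕ, 1 ≤ n → f (n+1) ≤ f n := by
    intro n hn
    rw [hf]
    dsimp only
    have h1 : (0:ℝ) < n := by exact_mod_cast hn
    exact rpow_anti hs0.le h1 (by push_cast; linarith)
  have hMlow : ∀ n : ℕ, 1 ≤ n → Real.log n - 9 ≤ M n := by
    intro n hn
    rw [hM]
    dsimp only
    rw [show ∑ m ∈ Finset.range (n+1), c m
        = ∑ p ∈ (Finset.range (n+1)).filter Nat.Prime, Real.log p / p from
      by rw [Finset.sum_filter]]
    exact mertens_lower n hn
  have hM0 : M 0 = 0 := by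
    rw [hM]; dsimp only
    rw [Finset.sum_range_one, hc]
    simp [Nat.not_prime_zero]
  have hM1 : M 1 = 0 := by
    rw [hM]; dsimp only
    rw [Finset.sum_range_succ, Finset.sum_range_one, hc]
    simp [Nat.not_prime_zero, Nat.not_prime_one]
  -- Step A : abel expansion
  have stepA : ∑ n ∈ Finset.range (L+1), c n * f n
      = f L * M L + ∑ n ∈ Finset.Ico 0 L, (f n - f (n+1)) * M n := by
    have swap := triangle_swap (fun n => f n - f (n+1)) c 0 L
    have htele : ∀ m ∈ Finset.Ico 0 L, ∑ n ∈ Finset.Ico m L, (f n - f (n+1)) = f m - f L := by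
      intro m hm
      exact tele f m L (Finset.mem_Ico.mp hm).2.le
    have hMex : ∀ x:ℕ, M x = ∑ m ∈ Finset.Ico 0 (x+1), c m := fun x => by
      rw [hM]; dsimp only; rw [Finset.range_eq_Ico]
    have swap2 : ∑ n ∈ Finset.Ico 0 L, (f n - f (n+1)) * M n
        = ∑ m ∈ Finset.Ico 0 L, c m * (f m - f L) := by
      calc ∑ n ∈ Finset.Ico 0 L, (f n - f (n+1)) * M n
          = ∑ n ∈ Finset.Ico 0 L, (f n - f (n+1)) * ∑ m ∈ Finset.Ico 0 (n+1), c m :=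
            Finset.sum_congr rfl (fun n _ => by rw [hMex])
        _ = ∑ m ∈ Finset.Ico 0 L, c m * ∑ n ∈ Finset.Ico m L, (f n - f (n+1)) := swap
        _ = ∑ m ∈ Finset.Ico 0 L, c m * (f m - f L) :=
            Finset.sum_congr rfl (fun m hm => by rw [htele m hm])
    have hML : M L = (∑ m ∈ Finset.Ico 0 L, c m) + c L := by
      rw [hMex]
      rw [Finset.sum_Ico_succ_top (by omega)]
    have hexp : ∑ m ∈ Finset.Ico 0 L, c m * (f m - f L)
        = ∑ m ∈ Finset.Ico 0 L, c m * f m - (∑ m ∈ Finset.Ico 0 L, c m) * f L := by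
      simp only [mul_sub]
      rw [Finset.sum_sub_distrib, Finset.sum_mul]
    rw [swap2, hML, hexp, Finset.sum_range_succ, Finset.range_eq_Ico]
    ring
  rw [stepA]
  have hsplit2 : ∑ n ∈ Finset.Ico 0 L, (f n - f (n+1)) * M n
      = ∑ n ∈ Finset.Ico 2 L, (f n - f (n+1)) * M n := by
    rw [← Finset.sum_Ico_consecutive _ (by omega : (0:ℕ) ≤ 2) (by omega : 2 ≤ L)]
    have h02 : ∑ n ∈ Finset.Ico 0 2, (f n - f (n+1)) * M n = 0 := by
      rw [show Finset.Ico 0 2 = {0, 1} from rfl]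
      rw [Finset.sum_insert (by decide), Finset.sum_singleton, hM0, hM1]
      ring
    rw [h02, zero_add]
  rw [hsplit2]
  -- basic bounds used in both cases
  have hexp_low : 1 - s * Real.log N ≤ N^(-s) := by
    rw [Real.rpow_def_of_pos hN0]
    have := Real.add_one_le_exp (Real.log N * (-s))
    linarith
  have hlogN2 : (1 - N^(-s))/s ≤ Real.log N := by
    rw [div_le_iff₀ hs0]
    nlinarith
  rcases Nat.lt_or_ge L 3 with hL3 | hL3
  · -- L = 2, so N = 3
    have hLeq : L = 2 := by omega
    subst hLeq
    simp only [Finset.Ico_self, Finset.sum_empty, add_zero]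
    have hM2 : 0 ≤ M 2 := Finset.sum_nonneg (fun m _ => hc0 m)
    have hf2 : 0 < f 2 := hfpos 2 (by omega)
    have hN3 : N ≤ 3 := by
      have h3 : (⌈N⌉₊:ℝ) = 3 := by rw [hL]; norm_num
      linarith [hKN, h3.ge]
    have hlogN3 : Real.log N ≤ 2 := by
      have := Real.log_le_sub_one_of_pos hN0
      linarith
    nlinarith [mul_nonneg hf2.le hM2]
  · -- main case : 3 ≤ L
    set g : ℕ → ℝ := fun n => f n - f (n+1) with hgdef
    set δ : ℕ → ℝ := fun m => Real.log m - Real.log ((m-1:ℕ):ℝ) with hδdef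
    have hB1 : ∑ n ∈ Finset.Ico 2 L, g n * (Real.log n - 9)
        ≤ ∑ n ∈ Finset.Ico 2 L, g n * M n := by
      apply Finset.sum_le_sum
      intro n hn
      have hn2 : 2 ≤ n := (Finset.mem_Ico.mp hn).1
      have hg : 0 ≤ g n := sub_nonneg.mpr (hg0 n (by omega))
      exact mul_le_mul_of_nonneg_left (hMlow n (by omega)) hg
    have hB2 : ∑ n ∈ Finset.Ico 2 L, g n * (Real.log n - 9)
        = ∑ n ∈ Finset.Ico 2 L, g n * Real.log n - 9 * (f 2 - f L) := by
      have h1 : ∀ n ∈ Finset.Ico 2 L, g n * (Real.log n - 9)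
          = g n * Real.log n - 9 * g n := fun n _ => by ring
      rw [Finset.sum_congr rfl h1, Finset.sum_sub_distrib, ← Finset.mul_sum,
        tele f 2 L (by omega)]
    have hB3 : ∑ n ∈ Finset.Ico 2 L, g n * Real.log n
        = Real.log 2 * (f 2 - f L)
          + ∑ m ∈ Finset.Ico 3 L, δ m * (f m - f L) := by
      have hdec : ∀ n ∈ Finset.Ico 2 L, g n * Real.log n
          = g n * Real.log 2 + g n * ∑ m ∈ Finset.Ico 3 (n+1), δ m := by
        intro n hn
        have h2n : 2 ≤ n := (Finset.mem_Ico.mp hn).1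
        have := tele_log n h2n
        rw [hδdef]
        dsimp only
        rw [this]
        ring
      rw [Finset.sum_congr rfl hdec, Finset.sum_add_distrib, ← Finset.sum_mul,
        tele f 2 L (by omega)]
      congr 1
      · ring
      · rw [← Finset.sum_Ico_consecutive _ (by omega : (2:ℕ) ≤ 3) (by omega : 3 ≤ L)]
        have h23 : ∑ n ∈ Finset.Ico 2 3, g n * ∑ m ∈ Finset.Ico 3 (n+1), δ m = 0 := by
          rw [show Finset.Ico 2 3 = {2} from rfl, Finset.sum_singleton]
          simp
        rw [h23, zero_add, triangle_swap g δ 3 L]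
        apply Finset.sum_congr rfl
        intro m hm
        rw [tele f m L (Finset.mem_Ico.mp hm).2.le]
    have hB4 : (f 3 - f L)/s - (Real.log ((L-1:ℕ):ℝ) - Real.log 2) * f L
        ≤ ∑ m ∈ Finset.Ico 3 L, δ m * (f m - f L) := by
      have hexp2 : ∀ m ∈ Finset.Ico 3 L, δ m * (f m - f L)
          = δ m * f m - δ m * f L := fun m _ => by ring
      rw [Finset.sum_congr rfl hexp2, Finset.sum_sub_distrib, ← Finset.sum_mul]
      have hsum1 : (f 3 - f L)/s ≤ ∑ m ∈ Finset.Ico 3 L, δ m * f m := by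
        have hper : ∀ m ∈ Finset.Ico 3 L, (f m - f (m+1))/s ≤ δ m * f m := by
          intro m hm
          have hm3 : 3 ≤ m := (Finset.mem_Ico.mp hm).1
          have hfm : 0 < f m := hfpos m (by omega)
          have hδm : 1/(m:ℝ) ≤ δ m := log_diff_ge m (by omega)
          have hd : f m - f (m+1) ≤ s * f m / m := by
            rw [hf]
            dsimp only
            push_cast
            exact rpow_diff hs0 (by linarith) m (by omega)
          have hm0 : (0:ℝ) < m := by exact_mod_cast (by omega : 0 < m)
          rw [div_le_iff₀ hs0]
          calc f m - f (m+1) ≤ s * f m / m := hd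
            _ = (1/(m:ℝ)) * f m * s := by ring
            _ ≤ δ m * f m * s := by
                have : (1/(m:ℝ)) * f m ≤ δ m * f m :=
                  mul_le_mul_of_nonneg_right hδm hfm.le
                nlinarith
        calc (f 3 - f L)/s = (∑ m ∈ Finset.Ico 3 L, (f m - f (m+1)))/s := by
              rw [tele f 3 L (by omega)]
          _ = ∑ m ∈ Finset.Ico 3 L, (f m - f (m+1))/s := Finset.sum_div _ _ _
          _ ≤ ∑ m ∈ Finset.Ico 3 L, δ m * f m := Finset.sum_le_sum hper
      have hsum2 : ∑ m ∈ Finset.Ico 3 L, δ m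
          = Real.log ((L-1:ℕ):ℝ) - Real.log 2 := by
        have hL1 : (L-1) + 1 = L := by omega
        have := tele_log (L-1) (by omega)
        rw [hL1] at this
        exact this
      rw [hsum2]
      linarith
    -- numeric assembly
    have hfL : 0 < f L := hfpos L (by omega)
    have hf2le1 : f 2 ≤ 1 :=
      Real.rpow_le_one_of_one_le_of_nonpos (by norm_num) (by linarith)
    have hlogmono : Real.log ((L-1:ℕ):ℝ) ≤ Real.log L := by
      have h1 : ((L-1:ℕ):ℝ) ≤ (L:ℝ) := by exact_mod_cast Nat.sub_le L 1
      have h2 : (0:ℝ) < ((L-1:ℕ):ℝ) := by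
        have : 2 ≤ L - 1 := by omega
        exact_mod_cast (by omega : 0 < L - 1)
      exact Real.log_le_log h2 h1
    have hMLlow : Real.log L - 9 ≤ M L := hMlow L (by omega)
    have hf3 : 1 - s * Real.log 3 ≤ f 3 := by
      have : f 3 = (3:ℝ)^(-s) := by
        rw [hf]
        norm_num
      rw [this]
      exact rpow_exp_low 3 s (by norm_num)
    have hfLup : f L ≤ N^(-s) + s := by
      have hcast : (L:ℝ) = (⌈N⌉₊:ℝ) - 1 := by rw [hL]; push_cast; ring
      have hLN : 2*N/3 ≤ (L:ℝ) := by
        rw [hcast]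
        linarith [hKN]
      have h1 : f L ≤ (2*N/3)^(-s) := by
        rw [hf]
        exact rpow_anti hs0.le (by linarith) hLN
      have h2 : (2*N/3:ℝ)^(-s) = (2/3:ℝ)^(-s) * N^(-s) := by
        rw [show (2*N/3:ℝ) = (2/3)*N by ring, Real.mul_rpow (by norm_num) hN0.le]
      have h3 : (2/3:ℝ)^(-s) ≤ 1 + s := twothirds s hs0 hs1
      have h4 : N^(-s) ≤ 1 :=
        Real.rpow_le_one_of_one_le_of_nonpos (by linarith) (by linarith)
      have h5 : (0:ℝ) ≤ N^(-s) := Real.rpow_nonneg hN0.le _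
      calc f L ≤ (2*N/3)^(-s) := h1
        _ = (2/3:ℝ)^(-s) * N^(-s) := h2
        _ ≤ (1+s) * N^(-s) := mul_le_mul_of_nonneg_right h3 h5
        _ = N^(-s) + s * N^(-s) := by ring
        _ ≤ N^(-s) + s := by
            have hss : s * N^(-s) ≤ s * 1 := mul_le_mul_of_nonneg_left h4 hs0.le
            linarith
    have hlog3le : Real.log 3 ≤ 2 := by
      have := Real.log_le_sub_one_of_pos (show (0:ℝ) < 3 by norm_num)
      linarith
    have hlog2pos : 0 ≤ Real.log 2 := Real.log_nonneg (by norm_num)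
    have hlog3pos : 0 ≤ Real.log 3 := Real.log_nonneg (by norm_num)
    -- divide the f3 - fL bound by s
    have hdiv : (1 - N^(-s))/s - Real.log 3 - 1 ≤ (f 3 - f L)/s := by
      have hnum : 1 - N^(-s) - s*Real.log 3 - s ≤ f 3 - f L := by linarith
      have heq : (1 - N^(-s) - s*Real.log 3 - s)/s
          = (1 - N^(-s))/s - Real.log 3 - 1 := by
        field_simp
      rw [← heq]
      exact (div_le_div_iff_of_pos_right hs0).mpr hnum
    -- products
    have hq1 : f L * Real.log L - 9 * f L ≤ f L * M L := by
      calc f L * Real.log L - 9 * f L = f L * (Real.log L - 9) := by ring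
        _ ≤ f L * M L := mul_le_mul_of_nonneg_left hMLlow hfL.le
    have hq2 : f L * Real.log ((L-1:ℕ):ℝ) ≤ f L * Real.log L :=
      mul_le_mul_of_nonneg_left hlogmono hfL.le
    have hq3 : 0 ≤ Real.log 2 * f 2 := mul_nonneg hlog2pos (hfpos 2 (by omega)).le
    linarith [hB1, hB2, hB3, hB4, hdiv, hq1, hq2, hq3, hf2le1, hfL.le]

end Aux

/-- If `∑_{p<N} 2(log p)/p^σ ≤ 1/(σ-1) + B` for all `σ ∈ (1, 3/2]`, then
`log N ≤ (B + C)/A` for an absolute constant `C`, where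
`A = sup_{λ>0}(1-2e^{-λ})/λ`; in particular `N ≤ exp((B+C)/A)`. -/
theorem stmt_18 :
    ∃ C : ℝ, ∀ (N B : ℝ), 3 ≤ N → 0 < B →
      (∀ σ : ℝ, 1 < σ → σ ≤ 3 / 2 →
        (∑ p ∈ primesLtR N, 2 * Real.log p / (p : ℝ) ^ σ) ≤ 1 / (σ - 1) + B) →
      Real.log N ≤ (B + C) / constA ∧ N ≤ Real.exp ((B + C) / constA) := by
  refine ⟨24, ?_⟩
  intro N B hN hB h
  have hN0 : (0:ℝ) < N := by linarith
  have hlogN : 0 < Real.log N := Real.log_pos (by linarith)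
  -- constA is positive
  have hbdd : BddAbove {x : ℝ | ∃ l : ℝ, 0 < l ∧ x = (1 - 2 * Real.exp (-l)) / l} := by
    refine ⟨2, ?_⟩
    rintro x ⟨l, hl, rfl⟩
    rw [div_le_iff₀ hl]
    have := Real.add_one_le_exp (-l)
    linarith
  have hmem2 : (1 - 2 * Real.exp (-2)) / 2
      ∈ {x : ℝ | ∃ l : ℝ, 0 < l ∧ x = (1 - 2 * Real.exp (-l)) / l} :=
    ⟨2, by norm_num⟩
  have hApos : 0 < constA := by
    have hlt : (0:ℝ) < (1 - 2 * Real.exp (-2)) / 2 := by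
      have he1 : (2.7182818283:ℝ) < Real.exp 1 := Real.exp_one_gt_d9
      have he2 : (2:ℝ) < Real.exp 2 := by
        have : Real.exp 2 = Real.exp 1 * Real.exp 1 := by
          rw [← Real.exp_add]; norm_num
        nlinarith
      have : Real.exp (-2) < 1/2 := by
        rw [Real.exp_neg]
        rw [inv_lt_comm₀ (by positivity) (by norm_num)]
        simpa using he2
      linarith
    exact lt_of_lt_of_le hlt (le_csSup hbdd hmem2)
  -- every member of the set is at most (B+24)/log N
  have hmain : ∀ x ∈ {x : ℝ | ∃ l : ℝ, 0 < l ∧ x = (1 - 2 * Real.exp (-l)) / l},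
      x ≤ (B + 24) / Real.log N := by
    rintro x ⟨l, hl, rfl⟩
    rcases le_or_gt l (Real.log N / 2) with hcase | hcase
    · -- use the hypothesis at σ = 1 + l / log N
      set s := l / Real.log N with hs
      have hs0 : 0 < s := div_pos hl hlogN
      have hs12 : s ≤ 1/2 := by
        rw [hs, div_le_div_iff₀ hlogN (by norm_num)]
        linarith
      have hσ1 : 1 < 1 + s := by linarith
      have hσ2 : 1 + s ≤ 3/2 := by linarith
      have H := h (1+s) hσ1 hσ2
      have hKey := key_lemma N hN s hs0 hs12
      -- rewrite the hypothesis sum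
      have hsum : (∑ p ∈ primesLtR N, 2 * Real.log p / (p:ℝ)^(1+s))
          = 2 * ∑ p ∈ primesLtR N, (Real.log p / p) * (p:ℝ)^(-s) := by
        rw [Finset.mul_sum]
        apply Finset.sum_congr rfl
        intro p hp
        have hp2 : p.Prime := by
          have := Finset.mem_filter.mp hp
          exact this.2.1
        have hp0 : (0:ℝ) < p := by exact_mod_cast hp2.pos
        rw [Real.rpow_add hp0, Real.rpow_one, Real.rpow_neg hp0.le]
        have hps : (0:ℝ) < (p:ℝ)^s := Real.rpow_pos_of_pos hp0 s
        field_simp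
      have hNs : N^(-s) = Real.exp (-l) := by
        have hls : Real.log N * (-s) = -l := by
          rw [hs]
          field_simp
        rw [Real.rpow_def_of_pos hN0, hls]
      have hinv : 1/(1 + s - 1) = Real.log N / l := by
        rw [show (1:ℝ) + s - 1 = s by ring, hs, one_div_div]
      rw [hsum, hinv] at H
      rw [hNs] at hKey
      have hsval : (1 - Real.exp (-l))/s = (1 - Real.exp (-l)) * Real.log N / l := by
        rw [hs]
        field_simp
      rw [hsval] at hKey
      -- combine : 2*((1 - e^{-l}) log N / l - 12) ≤ log N / l + B
      have hcomb : 2 * ((1 - Real.exp (-l)) * Real.log N / l - 12)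
          ≤ Real.log N / l + B := by linarith
      have h1 := mul_le_mul_of_nonneg_right hcomb hl.le
      have h2 : (1 - Real.exp (-l)) * Real.log N / l * l
          = (1 - Real.exp (-l)) * Real.log N := div_mul_cancel₀ _ hl.ne'
      have h3 : Real.log N / l * l = Real.log N := div_mul_cancel₀ _ hl.ne'
      rw [div_le_div_iff₀ hl hlogN]
      nlinarith [h1, h2, h3]
    · -- large l : trivial since (1-2e^{-l})/l ≤ 1/l < 2/log N
      have hexp0 : 0 < Real.exp (-l) := Real.exp_pos _
      have t1 : (1 - 2 * Real.exp (-l)) / l ≤ 1 / l :=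
        (div_le_div_iff_of_pos_right hl).mpr (by linarith)
      have t2 : 1 / l < 2 / Real.log N := by
        rw [div_lt_div_iff₀ hl hlogN]
        linarith
      have t3 : 2 / Real.log N ≤ (B + 24) / Real.log N :=
        (div_le_div_iff_of_pos_right hlogN).mpr (by linarith)
      linarith
  have hsup : constA ≤ (B + 24) / Real.log N :=
    Real.sSup_le hmain (by positivity)
  have hfin : Real.log N ≤ (B + 24) / constA := by
    rw [le_div_iff₀ hApos]
    have := (le_div_iff₀ hlogN).mp hsup
    linarith [this]
  exact ⟨hfin, by
    calc N = Real.exp (Real.log N) := (Real.exp_log hN0).symm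
      _ ≤ Real.exp ((B + 24) / constA) := Real.exp_le_exp.mpr hfin⟩
end
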